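/- arXiv:2306.14532 — 10 statements merged into one kernel-verified Lean document; each statement's English description precedes it below -/
import Mathlib

section
/- Let G be a finite group and N a nontrivial normal subgroup of G. If N satisfies a mixed identity with constants in G of length l, then G satisfies a mixed identity (with constants in G) of length at most 2l. -/
/-- A word with constants in `C` and `r` variables, in normal form:
`w = c₀ x_{i(1)}^{ε(1)} c₁ ⋯ c_{l-1} x_{i(l)}^{ε(l)} c_l`. -/
structure MixedWord (C : Type*) [Group C] (r : ℕ) where
  /-- the length `l` of the word: the number of occurrences of variables -/
  len : ℕ
  /-- the index `i(j)` of the variable occurring in the `j`-th position -/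
  idx : Fin len → Fin r
  /-- the exponent `ε(j) = ±1` of the `j`-th variable occurrence -/
  sgn : Fin len → ℤ
  /-- the constants `c₀, …, c_l` -/
  con : Fin (len + 1) → C
  sgn_pm : ∀ j, sgn j = 1 ∨ sgn j = -1

namespace MixedWord

variable {C : Type*} [Group C] {r : ℕ}

/-- Evaluation of a word with constants at an assignment of the variables. -/
def eval (w : MixedWord C r) (a : Fin r → C) : C :=
  w.con 0 * (List.ofFn fun j : Fin w.len => a (w.idx j) ^ w.sgn j * w.con j.succ).prod

/-- A word with constants is reduced if whenever two adjacent variable occurrences could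
cancel (same variable, opposite exponents), the intermediate constant is nontrivial. -/
def Reduced (w : MixedWord C r) : Prop :=
  ∀ (j : ℕ) (h : j + 1 < w.len),
    w.idx ⟨j, Nat.lt_of_succ_lt h⟩ = w.idx ⟨j + 1, h⟩ →
    w.sgn ⟨j, Nat.lt_of_succ_lt h⟩ = -w.sgn ⟨j + 1, h⟩ →
    w.con ⟨j + 1, Nat.lt_succ_of_lt h⟩ ≠ 1

/-- A reduced word is cyclically reduced if moreover, whenever the last and first variable
occurrences could cancel, `c_l c₀ ≠ 1`. -/
def CyclicallyReduced (w : MixedWord C r) : Prop :=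
  w.Reduced ∧ ∀ h : 0 < w.len,
    w.idx ⟨w.len - 1, by omega⟩ = w.idx ⟨0, h⟩ →
    w.sgn ⟨w.len - 1, by omega⟩ = -w.sgn ⟨0, h⟩ →
    w.con (Fin.last w.len) * w.con 0 ≠ 1

end MixedWord

-- helper lemmas
lemma myOfFnProd {M : Type*} [Monoid M] : ∀ (n : ℕ) (F : Fin n → M),
    (List.ofFn F).prod
      = ((List.range n).map (fun m => if h : m < n then F ⟨m, h⟩ else 1)).prod := by
  intro n
  induction n with
  | zero => intro F; simp
  | succ n ih =>
    intro F
    rw [List.ofFn_succ', List.prod_concat, List.range_succ, List.map_append,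
      List.prod_append, ih]
    simp only [List.map_singleton, List.prod_cons, List.prod_nil, mul_one, dif_pos (Nat.lt_succ_self n)]
    congr 2
    apply List.map_congr_left
    intro m hm
    have hm' : m < n := List.mem_range.mp hm
    rw [dif_pos hm', dif_pos (Nat.lt_succ_of_lt hm')]
    congr 1

lemma myEvalEq {G : Type*} [Group G] {r : ℕ} (w : MixedWord G r) (a : Fin r → G) :
    w.eval a = w.con 0 * ((List.range w.len).map
      (fun m => if h : m < w.len then
        a (w.idx ⟨m, h⟩) ^ w.sgn ⟨m, h⟩ * w.con ⟨m + 1, by omega⟩ else 1)).prod := by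
  rw [MixedWord.eval, myOfFnProd]
  rfl

section Builder

variable {G : Type*} [Group G] {r : ℕ}

/-- middle constant of a block -/
def bmid (w : MixedWord G r) (c : G) (t : ℕ) : G :=
  if h : t < w.len then c ^ w.sgn ⟨t, h⟩ else 1

/-- trailing constant of a block -/
def btl (w : MixedWord G r) (f : G) (t : ℕ) : G :=
  if h : t < w.len then (if w.sgn ⟨t, h⟩ = 1 then f else 1) else 1

/-- leading constant of a block -/
def bld (w : MixedWord G r) (f : G) (t : ℕ) : G :=
  if h : t < w.len then (if w.sgn ⟨t, h⟩ = 1 then 1 else f⁻¹) else 1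

/-- the constants of `w`, as a function on `ℕ` -/
def bwc (w : MixedWord G r) (t : ℕ) : G :=
  if h : t < w.len + 1 then w.con ⟨t, h⟩ else 1

/-- Substitute `x_i ↦ x_i⁻¹ c x_i f` into `w`, as a mixed word of length `2 * w.len`. -/
def blockWord (w : MixedWord G r) (c f : G) : MixedWord G r where
  len := 2 * w.len
  idx k := w.idx ⟨k.val / 2, by have := k.isLt; omega⟩
  sgn k := if k.val % 2 = 0 then -1 else 1
  con k :=
    if k.val % 2 = 1 then bmid w c (k.val / 2)
    else if k.val = 0 then bwc w 0 * bld w f 0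
    else btl w f (k.val / 2 - 1) * bwc w (k.val / 2) * bld w f (k.val / 2)
  sgn_pm k := by
    split
    · exact Or.inr rfl
    · exact Or.inl rfl

lemma blockWord_len (w : MixedWord G r) (c f : G) :
    (blockWord w c f).len = 2 * w.len := rfl

lemma blockWord_idx (w : MixedWord G r) (c f : G) (m : ℕ) (h : m < (blockWord w c f).len) :
    (blockWord w c f).idx ⟨m, h⟩ = w.idx ⟨m / 2, by have h2 : m < 2 * w.len := h; omega⟩ := rfl

lemma blockWord_sgn (w : MixedWord G r) (c f : G) (m : ℕ) (h : m < (blockWord w c f).len) :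
    (blockWord w c f).sgn ⟨m, h⟩ = if m % 2 = 0 then -1 else 1 := rfl

lemma blockWord_con_odd (w : MixedWord G r) (c f : G) (t : ℕ)
    (h : 2 * t + 1 < (blockWord w c f).len + 1) :
    (blockWord w c f).con ⟨2 * t + 1, h⟩ = bmid w c t := by
  show (if (2 * t + 1) % 2 = 1 then bmid w c ((2 * t + 1) / 2) else _) = bmid w c t
  rw [if_pos (by omega : (2 * t + 1) % 2 = 1), show (2 * t + 1) / 2 = t from by omega]

lemma blockWord_con_zero (w : MixedWord G r) (c f : G) :
    (blockWord w c f).con 0 = bwc w 0 * bld w f 0 := by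
  simp only [blockWord, Fin.val_zero]
  norm_num

lemma blockWord_con_even (w : MixedWord G r) (c f : G) (t : ℕ)
    (h : 2 * t + 2 < (blockWord w c f).len + 1) :
    (blockWord w c f).con ⟨2 * t + 2, h⟩ = btl w f t * bwc w (t + 1) * bld w f (t + 1) := by
  show (if (2 * t + 2) % 2 = 1 then _
      else if (2 * t + 2 : ℕ) = 0 then _
      else btl w f ((2 * t + 2) / 2 - 1) * bwc w ((2 * t + 2) / 2) * bld w f ((2 * t + 2) / 2))
      = btl w f t * bwc w (t + 1) * bld w f (t + 1)
  rw [if_neg (by omega : ¬ (2 * t + 2) % 2 = 1), if_neg (by omega : ¬ (2 * t + 2) = 0),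
    show (2 * t + 2) / 2 = t + 1 from by omega, show t + 1 - 1 = t from rfl]

theorem blockWord_reduced (w : MixedWord G r) (c f : G)
    (hred : w.Reduced) (hc : c ≠ 1)
    (Hp : ∀ (t : ℕ) (h : t + 1 < w.len), w.idx ⟨t, by omega⟩ = w.idx ⟨t + 1, h⟩ →
      w.sgn ⟨t, by omega⟩ = 1 → w.sgn ⟨t + 1, h⟩ = 1 → f * w.con ⟨t + 1, by omega⟩ ≠ 1)
    (Hm : ∀ (t : ℕ) (h : t + 1 < w.len), w.idx ⟨t, by omega⟩ = w.idx ⟨t + 1, h⟩ →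
      w.sgn ⟨t, by omega⟩ = -1 → w.sgn ⟨t + 1, h⟩ = -1 → w.con ⟨t + 1, by omega⟩ * f⁻¹ ≠ 1) :
    (blockWord w c f).Reduced := by
  intro j hj hidx hsgn
  have hj2 : j + 1 < 2 * w.len := hj
  clear hsgn
  rcases Nat.mod_two_eq_zero_or_one j with he | ho
  · -- j even : the constant is c^{±1}
    obtain ⟨t, rfl⟩ : ∃ t, j = 2 * t := ⟨j / 2, by omega⟩
    have ht : t < w.len := by omega
    rw [blockWord_con_odd, bmid, dif_pos ht]
    rcases w.sgn_pm ⟨t, ht⟩ with h | h <;> rw [h] <;> simp [hc]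
  · -- j odd : block boundary
    obtain ⟨t, rfl⟩ : ∃ t, j = 2 * t + 1 := ⟨j / 2, by omega⟩
    have ht1 : t + 1 < w.len := by omega
    have ht0 : t < w.len := by omega
    have hidx' : w.idx ⟨t, by omega⟩ = w.idx ⟨t + 1, ht1⟩ := by
      rw [blockWord_idx, blockWord_idx] at hidx
      simpa only [show (2 * t + 1) / 2 = t from by omega,
        show (2 * t + 1 + 1) / 2 = t + 1 from by omega] using hidx
    show (blockWord w c f).con ⟨2 * t + 2, Nat.lt_succ_of_lt hj⟩ ≠ 1
    rw [blockWord_con_even]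
    rw [btl, dif_pos ht0, bld, dif_pos ht1, bwc, dif_pos (by omega : t + 1 < w.len + 1)]
    have A := w.sgn_pm ⟨t, ht0⟩
    have B := w.sgn_pm ⟨t + 1, ht1⟩
    have hcon : w.sgn ⟨t, ht0⟩ = -w.sgn ⟨t + 1, ht1⟩ → w.con ⟨t + 1, Nat.lt_succ_of_lt ht1⟩ ≠ 1 :=
      hred t ht1 hidx'
    rcases A with h1 | h1 <;> rcases B with h2 | h2
    · -- (+,+)
      simp only [h1, h2, reduceIte, mul_one]
      exact Hp t ht1 hidx' h1 h2
    · -- (+,-)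
      simp only [h1, h2, reduceIte, Int.reduceEq]
      have hcon' := hcon (by rw [h1, h2]; try norm_num)
      intro heq
      apply hcon'
      have h' := congrArg (fun y => f⁻¹ * y * f) heq
      simpa [mul_assoc] using h'
    · -- (-,+)
      simp only [h1, h2, reduceIte, Int.reduceEq, one_mul, mul_one]
      exact hcon (by rw [h1, h2]; try norm_num)
    · -- (-,-)
      simp only [h1, h2, reduceIte, Int.reduceEq, one_mul]
      exact Hm t ht1 hidx' h1 h2

set_option maxHeartbeats 1000000 in
theorem blockWord_eval (w : MixedWord G r) (c f : G) (a : Fin r → G) :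
    (blockWord w c f).eval a = w.eval (fun i => (a i)⁻¹ * c * a i * f) := by
  have hW : ∀ (t : ℕ), t ≤ w.len →
      (blockWord w c f).con 0 * ((List.range (2 * t)).map
        (fun m => if h : m < 2 * w.len
          then a ((blockWord w c f).idx ⟨m, h⟩) ^ (blockWord w c f).sgn ⟨m, h⟩ *
            (blockWord w c f).con ⟨m + 1,
              by have e : (blockWord w c f).len = 2 * w.len := rfl; omega⟩ else 1)).prod
      = w.con 0 * ((List.range t).map
        (fun m => if h : m < w.len
          then ((a (w.idx ⟨m, h⟩))⁻¹ * c * a (w.idx ⟨m, h⟩) * f) ^ w.sgn ⟨m, h⟩ *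
            w.con ⟨m + 1, by omega⟩ else 1)).prod * bld w f t := by
    intro t
    induction t with
    | zero =>
      intro _
      simp only [Nat.mul_zero, List.range_zero, List.map_nil, List.prod_nil, mul_one]
      rw [blockWord_con_zero, bwc, dif_pos (Nat.succ_pos w.len)]
      try rw [show (⟨0, Nat.succ_pos w.len⟩ : Fin (w.len + 1)) = 0 from rfl]
      try rw [mul_assoc]
    | succ t ih =>
      intro ht1
      have htL : t < w.len := ht1
      have iha := ih htL.le
      rw [show 2 * (t + 1) = 2 * t + 1 + 1 from by ring, List.prod_range_succ,
        List.prod_range_succ, List.prod_range_succ, ← mul_assoc, ← mul_assoc, iha]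
      have h2t : 2 * t < 2 * w.len := by omega
      have h2t1 : 2 * t + 1 < 2 * w.len := by omega
      simp only [dif_pos h2t, dif_pos h2t1, dif_pos htL]
      erw [blockWord_idx w c f (2 * t) h2t, blockWord_idx w c f (2 * t + 1) h2t1,
        blockWord_sgn w c f (2 * t) h2t, blockWord_sgn w c f (2 * t + 1) h2t1]
      simp only [show (2 * t) / 2 = t from by omega, show (2 * t + 1) / 2 = t from by omega,
        show (2 * t) % 2 = 0 from by omega, show (2 * t + 1) % 2 = 1 from by omega,
        show 2 * t + 1 + 1 = 2 * t + 2 from rfl, reduceIte, Nat.reduceEqDiff]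
      rw [blockWord_con_odd, blockWord_con_even]
      rw [bmid, dif_pos htL, btl, dif_pos htL, bwc, dif_pos (by omega : t + 1 < w.len + 1),
        bld, dif_pos htL]
      rcases w.sgn_pm ⟨t, htL⟩ with h1 | h1 <;>
        simp only [h1, reduceIte, Int.reduceEq, zpow_one, zpow_neg] <;>
        group
  have hfin := hW w.len le_rfl
  rw [bld, dif_neg (lt_irrefl w.len), mul_one] at hfin
  rw [myEvalEq, myEvalEq]
  exact hfin

end Builder

/-- The word `x ^ n` in one variable. -/
def powWord (G : Type*) [Group G] (n : ℕ) : MixedWord G 1 where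
  len := n
  idx := fun _ => 0
  sgn := fun _ => 1
  con := fun _ => 1
  sgn_pm := fun _ => Or.inl rfl

lemma powWord_eval {G : Type*} [Group G] (n : ℕ) (b : Fin 1 → G) :
    (powWord G n).eval b = (b 0) ^ n := by
  simp only [MixedWord.eval, powWord, zpow_one, mul_one, one_mul, List.ofFn_const,
    List.prod_replicate]

lemma powWord_reduced {G : Type*} [Group G] (n : ℕ) : (powWord G n).Reduced := by
  intro j h hidx hsgn
  exact absurd (show (1 : ℤ) = -1 from hsgn) (by norm_num)

/-- If a nontrivial normal subgroup `N` of a finite group `G` satisfies a mixed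
identity with constants in `G` of length `l`, then `G` satisfies a mixed identity (with
constants in `G`) of length at most `2 * l`. -/
theorem stmt2 {G : Type*} [Group G] [Finite G] (N : Subgroup G) [N.Normal] (hN : N ≠ ⊥)
    {r : ℕ} (w : MixedWord G r) (hred : w.Reduced) (hpos : 0 < w.len)
    (hid : ∀ a : Fin r → G, (∀ i, a i ∈ N) → w.eval a = 1) :
    ∃ (r' : ℕ) (w' : MixedWord G r'), w'.Reduced ∧ 0 < w'.len ∧ w'.len ≤ 2 * w.len ∧
      ∀ a : Fin r' → G, w'.eval a = 1 := by
  classical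
  obtain ⟨c₀, hc₀N, hc₀1⟩ : ∃ c₀, c₀ ∈ N ∧ c₀ ≠ 1 := by
    obtain ⟨⟨c₀, hmem⟩, hne⟩ := Subgroup.ne_bot_iff_exists_ne_one.mp hN
    exact ⟨c₀, hmem, by simpa [Subtype.ext_iff] using hne⟩
  have hpowN : ∀ x ∈ N, x ^ (Nat.card ↥N) = 1 := by
    intro x hx
    have h1 : (⟨x, hx⟩ : N) ^ Nat.card ↥N = 1 := pow_card_eq_one'
    have h2 : ((⟨x, hx⟩ : N) ^ Nat.card ↥N : G) = ((1 : N) : G) := congrArg Subtype.val h1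
    simpa using h2
  have hmemsub : ∀ (f : G), f ∈ N → ∀ (x : G), x⁻¹ * c₀ * x * f ∈ N := by
    intro f hf x
    refine mul_mem ?_ hf
    have := Subgroup.Normal.conj_mem ‹N.Normal› c₀ hc₀N x⁻¹
    simpa using this
  by_cases hcard : Nat.card ↥N ≤ w.len
  · -- small N : use the word `(x⁻¹ c₀ x c₀) ^ |N|`
    have hNpos : 0 < Nat.card ↥N := Nat.card_pos
    refine ⟨1, blockWord (powWord G (Nat.card ↥N)) c₀ c₀, ?_, ?_, ?_, ?_⟩
    · refine blockWord_reduced _ _ _ (powWord_reduced _) hc₀1 ?_ ?_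
      · intro t h _ _ _
        simpa [powWord] using hc₀1
      · intro t h _ hs _
        exact absurd (show (1 : ℤ) = -1 from hs) (by norm_num)
    · show 0 < 2 * Nat.card ↥N
      omega
    · show 2 * Nat.card ↥N ≤ 2 * w.len
      omega
    · intro a
      rw [blockWord_eval, powWord_eval]
      exact hpowN _ (hmemsub c₀ hc₀N (a 0))
  · -- large N : substitute `x_i ↦ x_i⁻¹ c₀ x_i f` into `w` itself
    push_neg at hcard
    set bad : ℕ → G := fun t =>
      if h : t + 1 < w.len then
        (if w.sgn ⟨t, by omega⟩ = 1 then (w.con ⟨t + 1, by omega⟩)⁻¹ else w.con ⟨t + 1, by omega⟩)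
      else 1 with hbad
    set S : Finset G := (Finset.range (w.len - 1)).image bad with hS
    have hScard : S.card < Nat.card ↥N := by
      have h1 : S.card ≤ w.len - 1 := le_trans Finset.card_image_le (by simp)
      omega
    obtain ⟨f, hfN, hfS⟩ : ∃ f, f ∈ N ∧ f ∉ S := by
      by_contra hcon
      push_neg at hcon
      have hinj : Function.Injective (fun x : ↥N => (⟨(x : G), hcon x x.2⟩ : {y // y ∈ S})) := by
        intro x y hxy
        have h' : (x : G) = (y : G) := by simpa using congrArg Subtype.val hxy
        exact Subtype.ext h'
      have := Nat.card_le_card_of_injective _ hinj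
      rw [Nat.card_eq_finsetCard] at this
      omega
    refine ⟨r, blockWord w c₀ f, ?_, ?_, ?_, ?_⟩
    · refine blockWord_reduced _ _ _ hred hc₀1 ?_ ?_
      · intro t h hix hs1 hs2 heq
        apply hfS
        rw [hS]
        refine Finset.mem_image.mpr ⟨t, Finset.mem_range.mpr (by omega), ?_⟩
        simp only [hbad, dif_pos h, if_pos hs1]
        exact (eq_inv_of_mul_eq_one_left heq).symm
      · intro t h hix hs1 hs2 heq
        apply hfS
        rw [hS]
        refine Finset.mem_image.mpr ⟨t, Finset.mem_range.mpr (by omega), ?_⟩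
        simp only [hbad, dif_pos h, if_neg (show ¬ w.sgn ⟨t, by omega⟩ = 1 from by rw [hs1]; norm_num)]
        exact mul_inv_eq_one.mp heq
    · show 0 < 2 * w.len
      omega
    · exact le_of_eq rfl
    · intro a
      rw [blockWord_eval]
      exact hid _ (fun i => hmemsub f hfN (a i))
end

section
/- Let G ≤ C be finite groups and let w = c₀ x_{i(1)}^{ε(1)} c₁ ⋯ c_{l-1} x_{i(l)}^{ε(l)} c_l ∈ C * F_r be a reduced word of length l ≤ |G|. Then there exist elements g_{-i}, g_i ∈ G (for i = 1,…,r) such that substituting x_i ↦ g_{-i} x g_i yields a one-variable word w' = c₀' x^{ε(1)} c₁' ⋯ c_{l-1}' x^{ε(l)} c_l' ∈ C * ⟨x⟩ in which all intermediate constants c₁',…,c_{l-1}' are nontrivial. -/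

lemma exists_avoid {κ ι G : Type*} [Fintype κ] [Fintype ι] [DecidableEq ι]
    [Group G] [Fintype G]
    (hn : Fintype.card κ < Fintype.card G)
    (a b : κ → ι) (hab : ∀ k, a k ≠ b k)
    (Q : κ → G → G → Prop)
    (hQ : ∀ k g x y, ¬ Q k x g → ¬ Q k y g → x = y) :
    ∃ f : ι → G, ∀ k, Q k (f (a k)) (f (b k)) := by
  classical
  by_contra hcon
  push_neg at hcon
  set Bad : κ → Finset (ι → G) :=
    fun k => Finset.univ.filter (fun f => ¬ Q k (f (a k)) (f (b k))) with hBad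
  have hcover : (Finset.univ : Finset (ι → G)) ⊆ Finset.univ.biUnion Bad := by
    intro f _
    obtain ⟨k, hk⟩ := hcon f
    exact Finset.mem_biUnion.2 ⟨k, Finset.mem_univ _, by simp [hBad, hk]⟩
  have hcard : ∀ k, (Bad k).card * Fintype.card G ≤ Fintype.card (ι → G) := by
    intro k
    have hinj : Set.InjOn (fun p : (ι → G) × G => Function.update p.1 (a k) p.2)
        (((Bad k) ×ˢ (Finset.univ : Finset G) : Finset _) : Set _) := by
      rintro ⟨f, g⟩ hf ⟨f', g'⟩ hf' heq
      simp only [Finset.mem_coe, Finset.mem_product, hBad,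
        Finset.mem_filter, Finset.mem_univ, true_and] at hf hf'
      have hg : g = g' := by
        have := congrFun heq (a k); simpa using this
      have hoff : ∀ x, x ≠ a k → f x = f' x := by
        intro x hx
        have := congrFun heq x
        simpa [Function.update_of_ne hx] using this
      have hfa : f (a k) = f' (a k) := by
        have hb : f (b k) = f' (b k) := hoff _ (Ne.symm (hab k))
        exact hQ k (f (b k)) _ _ hf.1 (hb ▸ hf'.1)
      have : f = f' := by
        funext x
        by_cases hx : x = a k
        · subst hx; exact hfa
        · exact hoff x hx
      simp [this, hg]
    have := Finset.card_le_card_of_injOn _ (fun p _ => Finset.mem_univ _) hinj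
    simpa [Finset.card_product] using this
  have hsum : Fintype.card (ι → G) ≤ ∑ k, (Bad k).card := by
    calc Fintype.card (ι → G) = (Finset.univ : Finset (ι → G)).card := (Finset.card_univ).symm
    _ ≤ (Finset.univ.biUnion Bad).card := Finset.card_le_card hcover
    _ ≤ ∑ k, (Bad k).card := Finset.card_biUnion_le
  have hTpos : 0 < Fintype.card (ι → G) := Fintype.card_pos
  have hfinal : Fintype.card (ι → G) * Fintype.card G ≤
      Fintype.card κ * Fintype.card (ι → G) := by
    calc Fintype.card (ι → G) * Fintype.card G
        ≤ (∑ k, (Bad k).card) * Fintype.card G := by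
          exact Nat.mul_le_mul_right _ hsum
    _ = ∑ k, (Bad k).card * Fintype.card G := by rw [Finset.sum_mul]
    _ ≤ ∑ _k : κ, Fintype.card (ι → G) := Finset.sum_le_sum (fun k _ => hcard k)
    _ = Fintype.card κ * Fintype.card (ι → G) := by simp [Finset.sum_const, mul_comm]
  nlinarith


/-- Given finite groups `G ≤ C` and a reduced word
`w = c₀ x_{i(1)}^{ε(1)} c₁ ⋯ c_{l-1} x_{i(l)}^{ε(l)} c_l ∈ C * F_r` of length `l ≤ |G|`,
there are elements `g_{-i}, g_i ∈ G` (for `i = 1, …, r`) such that the substitution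
`x_i ↦ g_{-i} x g_i` yields a one-variable word in which all intermediate constants
`c_j' = g_{ε(j)i(j)}^{ε(j)} c_j g_{-ε(j+1)i(j+1)}^{ε(j+1)}` (for `j = 1, …, l-1`) are
nontrivial. Here `gpos i` plays the role of `g_i` and `gneg i` that of `g_{-i}`. -/
theorem stmt4 {C : Type*} [Group C] [Finite C] (G : Subgroup C) {r : ℕ}
    (w : MixedWord C r) (hred : w.Reduced) (hlen : w.len ≤ Nat.card G) :
    ∃ gneg gpos : Fin r → G,
      ∀ (j : ℕ) (h : j + 1 < w.len),
        (if w.sgn ⟨j, Nat.lt_of_succ_lt h⟩ = 1 then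
            (gpos (w.idx ⟨j, Nat.lt_of_succ_lt h⟩) : C)
          else ((gneg (w.idx ⟨j, Nat.lt_of_succ_lt h⟩) : C))⁻¹) *
        w.con ⟨j + 1, Nat.lt_succ_of_lt h⟩ *
        (if w.sgn ⟨j + 1, h⟩ = 1 then (gneg (w.idx ⟨j + 1, h⟩) : C)
          else ((gpos (w.idx ⟨j + 1, h⟩) : C))⁻¹) ≠ 1 := by
  classical
  letI : Fintype G := Fintype.ofFinite G
  have hGpos : 0 < Fintype.card G := Fintype.card_pos
  have hNG : Nat.card G = Fintype.card G := Nat.card_eq_fintype_card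
  have h1 : ∀ j : Fin (w.len - 1), (j : ℕ) < w.len := fun j => by
    have := j.isLt; omega
  have h2 : ∀ j : Fin (w.len - 1), (j : ℕ) + 1 < w.len := fun j => by
    have := j.isLt; omega
  have h3 : ∀ j : Fin (w.len - 1), (j : ℕ) + 1 < w.len + 1 := fun j =>
    Nat.lt_succ_of_lt (h2 j)
  set s1 : Fin (w.len - 1) → Fin r × Bool :=
    fun j => (w.idx ⟨j.1, h1 j⟩, decide (w.sgn ⟨j.1, h1 j⟩ = 1)) with hs1
  set s2 : Fin (w.len - 1) → Fin r × Bool :=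
    fun j => (w.idx ⟨j.1 + 1, h2 j⟩, !decide (w.sgn ⟨j.1 + 1, h2 j⟩ = 1)) with hs2
  have hκ : Fintype.card {j : Fin (w.len - 1) // s1 j ≠ s2 j} < Fintype.card G := by
    calc Fintype.card {j : Fin (w.len - 1) // s1 j ≠ s2 j}
        ≤ Fintype.card (Fin (w.len - 1)) := Fintype.card_subtype_le _
    _ = w.len - 1 := Fintype.card_fin _
    _ < Fintype.card G := by omega
  obtain ⟨f, hf⟩ := exists_avoid (ι := Fin r × Bool) (G := G) hκ
    (fun k => s1 k.1) (fun k => s2 k.1) (fun k => k.2)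
    (fun k x y =>
      (if w.sgn ⟨k.1.1, h1 k.1⟩ = 1 then (x : C) else (x : C)⁻¹) *
      w.con ⟨k.1.1 + 1, h3 k.1⟩ *
      (if w.sgn ⟨k.1.1 + 1, h2 k.1⟩ = 1 then (y : C) else (y : C)⁻¹) ≠ 1)
    (by
    intro k g x y hx hy
    rw [not_not] at hx hy
    by_cases hε : w.sgn ⟨k.1.1, h1 k.1⟩ = 1
    · rw [if_pos hε] at hx hy
      have : (x : C) = y := by
        have hx' : (x : C) = (w.con ⟨k.1.1 + 1, h3 k.1⟩ *
            (if w.sgn ⟨k.1.1 + 1, h2 k.1⟩ = 1 then (g : C) else (g : C)⁻¹))⁻¹ := by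
          rw [eq_inv_iff_mul_eq_one, ← mul_assoc]; exact hx
        have hy' : (y : C) = (w.con ⟨k.1.1 + 1, h3 k.1⟩ *
            (if w.sgn ⟨k.1.1 + 1, h2 k.1⟩ = 1 then (g : C) else (g : C)⁻¹))⁻¹ := by
          rw [eq_inv_iff_mul_eq_one, ← mul_assoc]; exact hy
        rw [hx', hy']
      exact Subtype.coe_injective this
    · rw [if_neg hε] at hx hy
      have : (x : C)⁻¹ = (y : C)⁻¹ := by
        have hx' : (x : C)⁻¹ = (w.con ⟨k.1.1 + 1, h3 k.1⟩ *
            (if w.sgn ⟨k.1.1 + 1, h2 k.1⟩ = 1 then (g : C) else (g : C)⁻¹))⁻¹ := by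
          rw [eq_inv_iff_mul_eq_one, ← mul_assoc]; exact hx
        have hy' : (y : C)⁻¹ = (w.con ⟨k.1.1 + 1, h3 k.1⟩ *
            (if w.sgn ⟨k.1.1 + 1, h2 k.1⟩ = 1 then (g : C) else (g : C)⁻¹))⁻¹ := by
          rw [eq_inv_iff_mul_eq_one, ← mul_assoc]; exact hy
        rw [hx', hy']
      exact Subtype.coe_injective (inv_injective this))
  refine ⟨fun i => f (i, false), fun i => f (i, true), ?_⟩
  intro j h
  have hjlt : j < w.len - 1 := by omega
  by_cases hs : s1 ⟨j, hjlt⟩ = s2 ⟨j, hjlt⟩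
  · -- equal slots: automatically satisfied by reducedness
    simp only [hs1, hs2, Prod.mk.injEq] at hs
    obtain ⟨hidx, hbool⟩ := hs
    have hidx' : w.idx ⟨j, Nat.lt_of_succ_lt h⟩ = w.idx ⟨j + 1, h⟩ := hidx
    rcases w.sgn_pm ⟨j, Nat.lt_of_succ_lt h⟩ with hε | hε <;>
      rcases w.sgn_pm ⟨j + 1, h⟩ with hε' | hε'
    · rw [hε, hε'] at hbool; simp at hbool
    · have hc := hred j h hidx' (by rw [hε, hε']; try norm_num)
      rw [if_pos hε, if_neg (by rw [hε']; norm_num), hidx']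
      intro heq
      exact hc (mul_eq_left.mp (mul_inv_eq_one.mp heq))
    · have hc := hred j h hidx' (by rw [hε, hε']; try norm_num)
      rw [if_neg (by rw [hε]; norm_num), if_pos hε', hidx']
      intro heq
      rw [mul_assoc] at heq
      exact hc (right_eq_mul.mp (inv_mul_eq_one.mp heq))
    · rw [hε, hε'] at hbool; simp at hbool
  · have key := hf ⟨⟨j, hjlt⟩, hs⟩
    simp only [hs1, hs2] at key
    dsimp only at key ⊢
    rcases w.sgn_pm ⟨j, Nat.lt_of_succ_lt h⟩ with hε | hε <;>
      rcases w.sgn_pm ⟨j + 1, h⟩ with hε' | hε' <;>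
      · rw [hε, hε'] at key ⊢
        first
          | (norm_num at key ⊢; exact key)
          | norm_num at key ⊢
end

section
/- Every finite group G has a mixed identity with constants in G of length at most |G|, in one variable, cyclically reduced, with all intermediate constants nontrivial. -/
/-- Every finite group `G` has a mixed identity with constants in `G` of length
at most `|G|`, in one variable, cyclically reduced, with all intermediate constants
nontrivial. -/
theorem stmt5 {G : Type*} [Group G] [Finite G] :
    ∃ w : MixedWord G 1, 0 < w.len ∧ w.len ≤ Nat.card G ∧ w.CyclicallyReduced ∧
      (∀ (j : ℕ) (h : j + 1 < w.len), w.con ⟨j + 1, Nat.lt_succ_of_lt h⟩ ≠ 1) ∧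
      ∀ g : G, w.eval (fun _ => g) = 1 := by
  rcases subsingleton_or_nontrivial G with hs | hn
  · refine ⟨⟨1, fun _ => 0, fun _ => 1, fun _ => 1, fun _ => Or.inl rfl⟩, one_pos, ?_, ?_, ?_, ?_⟩
    · simp [Nat.card_unique]
    · refine ⟨fun j h => by change j + 1 < 1 at h; omega, fun h hi hs' => by simp at hs'⟩
    · intro j h; change j + 1 < 1 at h; omega
    · intro g; exact Subsingleton.elim _ _
  · obtain ⟨c, hc⟩ := exists_ne (1 : G)
    set k := Monoid.exponent G with hk
    have hkpos : 0 < k := Nat.pos_of_ne_zero Monoid.exponent_ne_zero_of_finite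
    refine ⟨⟨k, fun _ => 0, fun _ => 1, fun j => if j = 0 then 1 else c,
      fun _ => Or.inl rfl⟩, hkpos, ?_, ?_, ?_, ?_⟩
    · exact Nat.le_of_dvd Nat.card_pos Group.exponent_dvd_nat_card
    · exact ⟨fun j h hi hs' => by simp at hs', fun h hi hs' => by simp at hs'⟩
    · intro j h
      simp only [Fin.mk.injEq]
      rw [if_neg (by simp [Fin.ext_iff])]
      exact hc
    · intro g
      have : (List.ofFn fun j : Fin k =>
          g ^ (1 : ℤ) * (if (j.succ : Fin (k+1)) = 0 then 1 else c)).prod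
          = (g * c) ^ k := by
        have heq : (fun j : Fin k =>
            g ^ (1 : ℤ) * (if (j.succ : Fin (k+1)) = 0 then 1 else c))
            = fun _ : Fin k => g * c := by
          funext j
          rw [if_neg (Fin.succ_ne_zero j), zpow_one]
        rw [heq, List.ofFn_const, List.prod_replicate]
      simp only [MixedWord.eval, this, if_true, one_mul]
      exact Monoid.pow_exponent_eq_one (g * c)
end

section
/- Let G be a nontrivial nonabelian finite group, embedded in a group C with trivial centralizer C_C(G) = 1. Then no word w ∈ C * ⟨x⟩ of length 1 or 2 is a mixed identity for G with constants in C. -/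
/-- If conjugation by `c` inverts every element of `G`, then `G` is abelian. -/
lemma aux_conj_inv_abelian {C : Type*} [Group C] (G : Subgroup C) (c : C)
    (h : ∀ g ∈ G, g * c * g = c) : ∀ a ∈ G, ∀ b ∈ G, a * b = b * a := by
  have key : ∀ g ∈ G, c⁻¹ * g * c = g⁻¹ := by
    intro g hg
    have hgc := h g hg
    have : g * c = c * g⁻¹ := by
      calc g * c = (g * c * g) * g⁻¹ := by group
        _ = c * g⁻¹ := by rw [hgc]
    calc c⁻¹ * g * c = c⁻¹ * (g * c) := by group
      _ = c⁻¹ * (c * g⁻¹) := by rw [this]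
      _ = g⁻¹ := by group
  intro a ha b hb
  have h1 := key a ha
  have h2 := key b hb
  have h3 := key (a * b) (G.mul_mem ha hb)
  have : a⁻¹ * b⁻¹ = b⁻¹ * a⁻¹ := by
    calc a⁻¹ * b⁻¹ = (c⁻¹ * a * c) * (c⁻¹ * b * c) := by rw [h1, h2]
      _ = c⁻¹ * (a * b) * c := by group
      _ = (a * b)⁻¹ := h3
      _ = b⁻¹ * a⁻¹ := mul_inv_rev a b
  calc a * b = (b⁻¹ * a⁻¹)⁻¹ := by group
    _ = (a⁻¹ * b⁻¹)⁻¹ := by rw [this]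
    _ = b * a := by group

/-- If `G` is a nontrivial nonabelian finite group embedded in a group `C` with
trivial centralizer `C_C(G) = 1`, then no (reduced) word `w ∈ C * ⟨x⟩` of length 1 or 2 is a
mixed identity for `G` with constants in `C`. -/
theorem stmt6 {C : Type*} [Group C] (G : Subgroup C) [Finite G] [Nontrivial G]
    (hnab : ∃ a b : G, a * b ≠ b * a)
    (hcent : ∀ c : C, (∀ g ∈ G, c * g = g * c) → c = 1)
    (w : MixedWord C 1) (hw : w.len = 1 ∨ w.len = 2) (hred : w.Reduced) :
    ¬ ∀ g ∈ G, w.eval (fun _ => g) = 1 := by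
  intro hall
  obtain ⟨l, idx, sgn, con, hpm⟩ := w
  rcases hw with hl | hl
  · -- length 1
    subst hl
    simp only [MixedWord.eval, List.ofFn_succ, List.ofFn_zero, List.prod_cons,
      List.prod_nil, mul_one] at hall
    have key : ∀ g ∈ G, g ^ sgn 0 = (con 0)⁻¹ * (con (Fin.succ 0))⁻¹ := by
      intro g hg
      have hthis : con 0 * (g ^ sgn 0 * con (Fin.succ 0)) = 1 := hall g hg
      calc g ^ sgn 0 = (con 0)⁻¹ * (con 0 * (g ^ sgn 0 * con (Fin.succ 0))) *
          (con (Fin.succ 0))⁻¹ := by group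
        _ = (con 0)⁻¹ * 1 * (con (Fin.succ 0))⁻¹ := by rw [hthis]
        _ = _ := by group
    obtain ⟨⟨a, ha⟩, ⟨b, hb⟩, hab⟩ := exists_pair_ne G
    have : a = b := by
      have h1 := key a ha
      have h2 := key b hb
      have heq : a ^ sgn 0 = b ^ sgn 0 := h1.trans h2.symm
      rcases hpm 0 with hs | hs
      · simpa [hs] using heq
      · have : a⁻¹ = b⁻¹ := by simpa [hs] using heq
        exact inv_injective this
    exact hab (Subtype.ext this)
  · -- length 2
    subst hl
    simp only [MixedWord.eval, List.ofFn_succ, List.ofFn_zero, List.prod_cons,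
      List.prod_nil, mul_one] at hall
    have h1 := hall 1 G.one_mem
    simp only [one_zpow] at h1
    have key : ∀ g ∈ G, g ^ sgn 0 * con (Fin.succ 0) * g ^ sgn (Fin.succ (0 : Fin 1)) = con (Fin.succ 0) := by
      intro g hg
      have hg' := hall g hg
      calc g ^ sgn 0 * con (Fin.succ 0) * g ^ sgn (Fin.succ (0 : Fin 1))
          = (con 0)⁻¹ * (con 0 * (g ^ sgn 0 * con (Fin.succ 0) * (g ^ sgn (Fin.succ (0 : Fin 1)) * con (Fin.succ 0).succ))) *
            (con (Fin.succ 0).succ)⁻¹ := by group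
        _ = (con 0)⁻¹ * 1 * (con (Fin.succ 0).succ)⁻¹ := by rw [hg']
        _ = (con 0)⁻¹ * (con 0 * (1 * con (Fin.succ 0) * (1 * con (Fin.succ 0).succ))) *
            (con (Fin.succ 0).succ)⁻¹ := by rw [h1]
        _ = con (Fin.succ 0) := by group
    rcases hpm 0 with hp0 | hp0 <;> rcases hpm (Fin.succ (0 : Fin 1)) with hp1 | hp1
    · -- +1 +1 : g * c * g = c, abelian contradiction
      have hinv : ∀ g ∈ G, g * con (Fin.succ 0) * g = con (Fin.succ 0) := by
        intro g hg
        have := key g hg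
        rw [hp0, hp1] at this
        simpa using this
      obtain ⟨a, b, hab⟩ := hnab
      exact hab (Subtype.ext (aux_conj_inv_abelian G _ hinv a a.2 b b.2))
    · -- +1 -1 : g * c * g⁻¹ = c, centralizer
      have hcomm : ∀ g ∈ G, con (Fin.succ 0) * g = g * con (Fin.succ 0) := by
        intro g hg
        have := key g hg
        rw [hp0, hp1] at this
        simp only [zpow_one, zpow_neg_one] at this
        calc con (Fin.succ 0) * g = (g * con (Fin.succ 0) * g⁻¹) * g := by rw [this]
          _ = g * con (Fin.succ 0) := by group
      have hone : con (Fin.succ 0) = 1 := hcent _ hcomm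
      have hne := hred 0 (by norm_num) (Subsingleton.elim _ _)
        (show sgn 0 = -sgn (Fin.succ (0 : Fin 1)) by rw [hp0, hp1]; try norm_num)
      exact hne hone
    · -- -1 +1 : g⁻¹ * c * g = c, centralizer
      have hcomm : ∀ g ∈ G, con (Fin.succ 0) * g = g * con (Fin.succ 0) := by
        intro g hg
        have := key g hg
        rw [hp0, hp1] at this
        simp only [zpow_one, zpow_neg_one] at this
        calc con (Fin.succ 0) * g = g * (g⁻¹ * con (Fin.succ 0) * g) := by group
          _ = g * con (Fin.succ 0) := by rw [this]
      have hone : con (Fin.succ 0) = 1 := hcent _ hcomm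
      have hne := hred 0 (by norm_num) (Subsingleton.elim _ _)
        (show sgn 0 = -sgn (Fin.succ (0 : Fin 1)) by rw [hp0, hp1]; try norm_num)
      exact hne hone
    · -- -1 -1 : g⁻¹ * c * g⁻¹ = c; apply at g⁻¹
      have hinv : ∀ g ∈ G, g * con (Fin.succ 0) * g = con (Fin.succ 0) := by
        intro g hg
        have := key g⁻¹ (G.inv_mem hg)
        rw [hp0, hp1] at this
        simpa using this
      obtain ⟨a, b, hab⟩ := hnab
      exact hab (Subtype.ext (aux_conj_inv_abelian G _ hinv a a.2 b b.2))
end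

section
/- Let G be a nonabelian finite group of even order. Then no word w ∈ G * ⟨x⟩ of length 3 is a mixed identity for G (with constants in G). -/
section Aux

variable {G : Type*} [Group G]

/-- If `g c₁ g⁻¹ c₂ g = c₁ c₂` for all `g`, then `c₁ = 1` (plug in `g = c₁`). -/
private lemma aux_pmp (c1 c2 : G)
    (hW : ∀ g : G, g * (c1 * (g⁻¹ * (c2 * g))) = c1 * c2) : c1 = 1 := by
  have h1 := hW c1
  have key : (c1 * c2) * c1 = (c1 * c2) * 1 := by
    calc (c1 * c2) * c1 = c1 * (c1 * (c1⁻¹ * (c2 * c1))) := by group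
      _ = c1 * c2 := h1
      _ = (c1 * c2) * 1 := by group
  exact mul_left_cancel key

/-- If `g c₁ g c₂ g = c₁ c₂` for all `g`, then any involution `t` is trivial
(compare `g = c₁⁻¹ t` with `g = c₁⁻¹`). -/
private lemma aux_ppp (c1 c2 t : G) (ht : t * t = 1)
    (hW : ∀ g : G, g * (c1 * (g * (c2 * g))) = c1 * c2) : t = 1 := by
  have h1 := hW (c1⁻¹ * t)
  have h2 := hW c1⁻¹
  have key : (c1⁻¹ * (c2 * c1⁻¹)) * t = (c1⁻¹ * (c2 * c1⁻¹)) * 1 := by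
    calc (c1⁻¹ * (c2 * c1⁻¹)) * t
        = c1⁻¹ * ((t * t) * (c2 * (c1⁻¹ * t))) := by rw [ht]; group
      _ = (c1⁻¹ * t) * (c1 * ((c1⁻¹ * t) * (c2 * (c1⁻¹ * t)))) := by group
      _ = c1 * c2 := h1
      _ = c1⁻¹ * (c1 * (c1⁻¹ * (c2 * c1⁻¹))) := h2.symm
      _ = (c1⁻¹ * (c2 * c1⁻¹)) * 1 := by group
  exact mul_left_cancel key

/-- If `g c₁ g c₂ g⁻¹ = c₁ c₂` for all `g`, then `c₁` is central and `g² = c₂ g c₂⁻¹`,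
so any involution `t` is trivial. -/
private lemma aux_ppm (c1 c2 t : G) (ht : t * t = 1)
    (hW : ∀ g : G, g * (c1 * (g * (c2 * g⁻¹))) = c1 * c2) : t = 1 := by
  have r3 : c1 * (c1 * (c2 * c1⁻¹)) = c2 := mul_left_cancel (hW c1)
  have r3' : c1 * (c2 * c1⁻¹) = c1⁻¹ * c2 := by
    calc c1 * (c2 * c1⁻¹) = c1⁻¹ * (c1 * (c1 * (c2 * c1⁻¹))) := by group
      _ = c1⁻¹ * c2 := by rw [r3]
  have hcomm : ∀ g : G, c1 * g = g * c1 := by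
    intro g
    have e1 : g * ((c1 * (c1 * g)) * ((c1 * (c2 * c1⁻¹)) * g⁻¹)) = c1 * c2 := by
      calc g * ((c1 * (c1 * g)) * ((c1 * (c2 * c1⁻¹)) * g⁻¹))
          = (g * c1) * (c1 * ((g * c1) * (c2 * (g * c1)⁻¹))) := by group
        _ = c1 * c2 := hW (g * c1)
    rw [r3'] at e1
    have E : g * ((c1 * (c1 * g)) * ((c1⁻¹ * c2) * g⁻¹)) = g * (c1 * (g * (c2 * g⁻¹))) :=
      e1.trans (hW g).symm
    have E2 : ((c1 * c1) * ((c1 * g) * c1⁻¹)) * (c2 * g⁻¹) = ((c1 * c1) * g) * (c2 * g⁻¹) := by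
      calc ((c1 * c1) * ((c1 * g) * c1⁻¹)) * (c2 * g⁻¹)
          = (c1 * g⁻¹) * (g * ((c1 * (c1 * g)) * ((c1⁻¹ * c2) * g⁻¹))) := by group
        _ = (c1 * g⁻¹) * (g * (c1 * (g * (c2 * g⁻¹)))) := by rw [E]
        _ = ((c1 * c1) * g) * (c2 * g⁻¹) := by group
    have E3 := mul_left_cancel (mul_right_cancel E2)
    calc c1 * g = ((c1 * g) * c1⁻¹) * c1 := by group
      _ = g * c1 := by rw [E3]
  have bt : t⁻¹ = t := by
    calc t⁻¹ = (t * t) * t⁻¹ := by rw [ht]; group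
      _ = t := by group
  have h4 : t * (c1 * (t * (c2 * t))) = c1 * c2 := by
    have h5 := hW t
    rw [bt] at h5
    exact h5
  have key : (c1 * c2) * t = (c1 * c2) * 1 := by
    calc (c1 * c2) * t = c1 * ((t * t) * (c2 * t)) := by rw [ht]; group
      _ = (c1 * t) * (t * (c2 * t)) := by group
      _ = (t * c1) * (t * (c2 * t)) := by rw [hcomm t]
      _ = t * (c1 * (t * (c2 * t))) := by group
      _ = c1 * c2 := h4
      _ = (c1 * c2) * 1 := by group
  exact mul_left_cancel key

/-- If `g⁻¹ c₁ g c₂ g = c₁ c₂` for all `g`, then `c₂` is central and `g² = c₁⁻¹ g c₁`,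
so any involution `t` is trivial. -/
private lemma aux_mpp (c1 c2 t : G) (ht : t * t = 1)
    (hW : ∀ g : G, g⁻¹ * (c1 * (g * (c2 * g))) = c1 * c2) : t = 1 := by
  have r : c2 * (c1 * c2⁻¹) = c1 * c2 := by
    calc c2 * (c1 * c2⁻¹) = (c2⁻¹)⁻¹ * (c1 * (c2⁻¹ * (c2 * c2⁻¹))) := by group
      _ = c1 * c2 := hW c2⁻¹
  have hcomm : ∀ a : G, c2 * a = a * c2 := by
    intro a
    have e1 : a⁻¹ * ((c2 * (c1 * c2⁻¹)) * (a * a)) = c1 * c2 := by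
      calc a⁻¹ * ((c2 * (c1 * c2⁻¹)) * (a * a))
          = (c2⁻¹ * a)⁻¹ * (c1 * ((c2⁻¹ * a) * (c2 * (c2⁻¹ * a)))) := by group
        _ = c1 * c2 := hW (c2⁻¹ * a)
    rw [r] at e1
    have E : a⁻¹ * ((c1 * c2) * (a * a)) = a⁻¹ * (c1 * (a * (c2 * a))) := e1.trans (hW a).symm
    calc c2 * a = (c1⁻¹ * (a * (a⁻¹ * ((c1 * c2) * (a * a))))) * a⁻¹ := by group
      _ = (c1⁻¹ * (a * (a⁻¹ * (c1 * (a * (c2 * a)))))) * a⁻¹ := by rw [E]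
      _ = a * c2 := by group
  have h4 := hW t
  rw [hcomm t] at h4
  have ht' : t * (t * c2) = c2 := by rw [← mul_assoc, ht, one_mul]
  rw [ht'] at h4
  have key : t⁻¹ * (c1 * c2) = 1 * (c1 * c2) := by rw [h4, one_mul]
  have h5 : t⁻¹ = 1 := mul_right_cancel key
  calc t = (t⁻¹)⁻¹ := by group
    _ = 1 := by rw [h5, inv_one]

end Aux

/-- If `G` is a nonabelian finite group of even order, then no (reduced) word
`w ∈ G * ⟨x⟩` of length 3 is a mixed identity for `G` with constants in `G`. -/
theorem stmt7 {G : Type*} [Group G] [Finite G]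
    (hnab : ∃ a b : G, a * b ≠ b * a) (heven : Even (Nat.card G))
    (w : MixedWord G 1) (hw : w.len = 3) (hred : w.Reduced) :
    ¬ ∀ g : G, w.eval (fun _ => g) = 1 := by
  intro hall
  haveI : Fact (Nat.Prime 2) := ⟨Nat.prime_two⟩
  obtain ⟨t, htord⟩ := exists_prime_orderOf_dvd_card' (G := G) 2
    (by obtain ⟨k, hk⟩ := heven; exact ⟨k, by omega⟩)
  have ht2 : t * t = 1 := by
    have h := pow_orderOf_eq_one t
    rw [htord, pow_two] at h
    exact h
  have ht1 : t ≠ 1 := by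
    intro h
    rw [h, orderOf_one] at htord
    norm_num at htord
  obtain ⟨len, idx, sgn, con, hsgn⟩ := w
  dsimp at hw
  subst hw
  simp only [MixedWord.Reduced] at hred
  simp only [MixedWord.eval, List.ofFn_succ, List.ofFn_zero, List.prod_cons, List.prod_nil,
    mul_one, Fin.succ_zero_eq_one, Fin.succ_one_eq_two] at hall
  rcases hsgn 0 with h0 | h0 <;> rcases hsgn 1 with h1 | h1 <;> rcases hsgn 2 with h2 | h2 <;>
    rw [h0, h1, h2] at hall <;>
    simp only [zpow_one, zpow_neg_one] at hall
  -- case (+,+,+)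
  · have hW : ∀ g : G, g * (con 1 * (g * (con 2 * g))) = con 1 * con 2 := by
      intro g
      have h3 := mul_left_cancel ((hall g).trans (hall 1).symm)
      refine mul_right_cancel (b := con (Fin.succ 2)) ?_
      calc (g * (con 1 * (g * (con 2 * g)))) * con (Fin.succ 2)
          = g * con 1 * (g * con 2 * (g * con (Fin.succ 2))) := by group
        _ = (con 1 * con 2) * con (Fin.succ 2) := by rw [h3]; group
    exact ht1 (aux_ppp (con 1) (con 2) t ht2 hW)
  -- case (+,+,-)
  · have hW : ∀ g : G, g * (con 1 * (g * (con 2 * g⁻¹))) = con 1 * con 2 := by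
      intro g
      have h3 := mul_left_cancel ((hall g).trans (hall 1).symm)
      refine mul_right_cancel (b := con (Fin.succ 2)) ?_
      calc (g * (con 1 * (g * (con 2 * g⁻¹)))) * con (Fin.succ 2)
          = g * con 1 * (g * con 2 * (g⁻¹ * con (Fin.succ 2))) := by group
        _ = (con 1 * con 2) * con (Fin.succ 2) := by rw [h3]; group
    exact ht1 (aux_ppm (con 1) (con 2) t ht2 hW)
  -- case (+,-,+)
  · have hW : ∀ g : G, g * (con 1 * (g⁻¹ * (con 2 * g))) = con 1 * con 2 := by
      intro g
      have h3 := mul_left_cancel ((hall g).trans (hall 1).symm)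
      refine mul_right_cancel (b := con (Fin.succ 2)) ?_
      calc (g * (con 1 * (g⁻¹ * (con 2 * g)))) * con (Fin.succ 2)
          = g * con 1 * (g⁻¹ * con 2 * (g * con (Fin.succ 2))) := by group
        _ = (con 1 * con 2) * con (Fin.succ 2) := by rw [h3]; group
    exact hred 0 (by omega) (Subsingleton.elim _ _)
      (show sgn 0 = -sgn 1 by simp [h0, h1])
      (aux_pmp (con 1) (con 2) hW)
  -- case (+,-,-)
  · have hW : ∀ g : G, g * (con 1 * (g⁻¹ * (con 2 * g⁻¹))) = con 1 * con 2 := by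
      intro g
      have h3 := mul_left_cancel ((hall g).trans (hall 1).symm)
      refine mul_right_cancel (b := con (Fin.succ 2)) ?_
      calc (g * (con 1 * (g⁻¹ * (con 2 * g⁻¹)))) * con (Fin.succ 2)
          = g * con 1 * (g⁻¹ * con 2 * (g⁻¹ * con (Fin.succ 2))) := by group
        _ = (con 1 * con 2) * con (Fin.succ 2) := by rw [h3]; group
    have hW' : ∀ g : G, g⁻¹ * (con 1 * (g * (con 2 * g))) = con 1 * con 2 := by
      intro g
      have h := hW g⁻¹
      simp only [inv_inv] at h
      exact h
    exact ht1 (aux_mpp (con 1) (con 2) t ht2 hW')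
  -- case (-,+,+)
  · have hW : ∀ g : G, g⁻¹ * (con 1 * (g * (con 2 * g))) = con 1 * con 2 := by
      intro g
      have h3 := mul_left_cancel ((hall g).trans (hall 1).symm)
      refine mul_right_cancel (b := con (Fin.succ 2)) ?_
      calc (g⁻¹ * (con 1 * (g * (con 2 * g)))) * con (Fin.succ 2)
          = g⁻¹ * con 1 * (g * con 2 * (g * con (Fin.succ 2))) := by group
        _ = (con 1 * con 2) * con (Fin.succ 2) := by rw [h3]; group
    exact ht1 (aux_mpp (con 1) (con 2) t ht2 hW)
  -- case (-,+,-)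
  · have hW : ∀ g : G, g⁻¹ * (con 1 * (g * (con 2 * g⁻¹))) = con 1 * con 2 := by
      intro g
      have h3 := mul_left_cancel ((hall g).trans (hall 1).symm)
      refine mul_right_cancel (b := con (Fin.succ 2)) ?_
      calc (g⁻¹ * (con 1 * (g * (con 2 * g⁻¹)))) * con (Fin.succ 2)
          = g⁻¹ * con 1 * (g * con 2 * (g⁻¹ * con (Fin.succ 2))) := by group
        _ = (con 1 * con 2) * con (Fin.succ 2) := by rw [h3]; group
    have hW' : ∀ g : G, g * (con 1 * (g⁻¹ * (con 2 * g))) = con 1 * con 2 := by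
      intro g
      have h := hW g⁻¹
      simp only [inv_inv] at h
      exact h
    exact hred 0 (by omega) (Subsingleton.elim _ _)
      (show sgn 0 = -sgn 1 by simp [h0, h1])
      (aux_pmp (con 1) (con 2) hW')
  -- case (-,-,+)
  · have hW : ∀ g : G, g⁻¹ * (con 1 * (g⁻¹ * (con 2 * g))) = con 1 * con 2 := by
      intro g
      have h3 := mul_left_cancel ((hall g).trans (hall 1).symm)
      refine mul_right_cancel (b := con (Fin.succ 2)) ?_
      calc (g⁻¹ * (con 1 * (g⁻¹ * (con 2 * g)))) * con (Fin.succ 2)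
          = g⁻¹ * con 1 * (g⁻¹ * con 2 * (g * con (Fin.succ 2))) := by group
        _ = (con 1 * con 2) * con (Fin.succ 2) := by rw [h3]; group
    have hW' : ∀ g : G, g * (con 1 * (g * (con 2 * g⁻¹))) = con 1 * con 2 := by
      intro g
      have h := hW g⁻¹
      simp only [inv_inv] at h
      exact h
    exact ht1 (aux_ppm (con 1) (con 2) t ht2 hW')
  -- case (-,-,-)
  · have hW : ∀ g : G, g⁻¹ * (con 1 * (g⁻¹ * (con 2 * g⁻¹))) = con 1 * con 2 := by
      intro g
      have h3 := mul_left_cancel ((hall g).trans (hall 1).symm)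
      refine mul_right_cancel (b := con (Fin.succ 2)) ?_
      calc (g⁻¹ * (con 1 * (g⁻¹ * (con 2 * g⁻¹)))) * con (Fin.succ 2)
          = g⁻¹ * con 1 * (g⁻¹ * con 2 * (g⁻¹ * con (Fin.succ 2))) := by group
        _ = (con 1 * con 2) * con (Fin.succ 2) := by rw [h3]; group
    have hW' : ∀ g : G, g * (con 1 * (g * (con 2 * g))) = con 1 * con 2 := by
      intro g
      have h := hW g⁻¹
      simp only [inv_inv] at h
      exact h
    exact ht1 (aux_ppp (con 1) (con 2) t ht2 hW')
end

section
/- Let q be a prime power, V = F_q², and c₁,…,c_{l-1} ∈ GL₂(q) whose images in PGL₂(q) each fail to fix some common point of the projective line P(V). Then the following are equivalent: (i) the union of the fixed-point sets in P(V) of the images of c₁,…,c_{l-1} is not all of P(V); (ii) there exists a rank-one linear operator h : V → V with h² = 0 and h c_j h ≠ 0 for all j = 1,…,l-1; (iii) there exists a rank-one linear operator h : V → V with h² = 0 and h c₁ h c₂ h ⋯ h c_{l-1} h ≠ 0. -/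
open Matrix

namespace Stmt9Aux

variable {F : Type*} [Field F]

private lemma vmv_mulVec (v φ x : Fin 2 → F) :
    (vecMulVec v φ).mulVec x = (φ ⬝ᵥ x) • v := by
  ext i; simp [mulVec, vecMulVec_apply, dotProduct, Fin.sum_univ_two]; ring

private lemma vmv_sandwich (v φ : Fin 2 → F) (m : Matrix (Fin 2) (Fin 2) F) :
    vecMulVec v φ * m * vecMulVec v φ = (φ ⬝ᵥ m.mulVec v) • vecMulVec v φ := by
  ext i j; simp [mul_apply, vecMulVec_apply, dotProduct, mulVec, Fin.sum_univ_two]; ring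

private lemma range_vmv {v φ : Fin 2 → F} (hφ : φ ≠ 0) :
    LinearMap.range (vecMulVec v φ).mulVecLin = Submodule.span F {v} := by
  apply le_antisymm
  · rintro _ ⟨x, rfl⟩
    rw [mulVecLin_apply, vmv_mulVec]
    exact Submodule.smul_mem _ _ (Submodule.mem_span_singleton_self v)
  · rw [Submodule.span_le, Set.singleton_subset_iff]
    obtain ⟨i, hi⟩ := Function.ne_iff.mp hφ
    refine ⟨Pi.single i (φ i)⁻¹, ?_⟩
    rw [mulVecLin_apply, vmv_mulVec]
    have : φ ⬝ᵥ Pi.single i (φ i)⁻¹ = 1 := by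
      simp [dotProduct, Pi.single_apply, mul_inv_cancel₀ hi]
    rw [this, one_smul]

private lemma rank_vmv {v φ : Fin 2 → F} (hv : v ≠ 0) (hφ : φ ≠ 0) :
    (vecMulVec v φ).rank = 1 := by
  rw [Matrix.rank, range_vmv hφ, finrank_span_singleton hv]

private lemma ortho {v φ : Fin 2 → F} (hv : v ≠ 0) (hφ : φ ≠ 0)
    (h0 : φ ⬝ᵥ v = 0) (w : Fin 2 → F) :
    φ ⬝ᵥ w = 0 ↔ ∃ a : F, w = a • v := by
  constructor
  · intro hw
    simp only [dotProduct, Fin.sum_univ_two] at hw h0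
    have hdet : w 0 * v 1 - v 0 * w 1 = 0 := by
      rcases Function.ne_iff.mp hφ with ⟨i, hi⟩
      fin_cases i
      · have h : φ 0 * (w 0 * v 1 - v 0 * w 1) = 0 := by
          linear_combination v 1 * hw - w 1 * h0
        rcases mul_eq_zero.mp h with h | h
        · exact absurd h hi
        · exact h
      · have h : φ 1 * (w 0 * v 1 - v 0 * w 1) = 0 := by
          linear_combination w 0 * h0 - v 0 * hw
        rcases mul_eq_zero.mp h with h | h
        · exact absurd h hi
        · exact h
    by_cases hv0 : v 0 = 0
    · have hv1 : v 1 ≠ 0 := by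
        intro hv1; apply hv; funext i; fin_cases i <;> simp [hv0, hv1]
      refine ⟨w 1 / v 1, funext fun i => ?_⟩
      fin_cases i
      · show w 0 = w 1 / v 1 * v 0
        field_simp
        linear_combination hdet
      · show w 1 = w 1 / v 1 * v 1
        field_simp
    · refine ⟨w 0 / v 0, funext fun i => ?_⟩
      fin_cases i
      · show w 0 = w 0 / v 0 * v 0
        field_simp
      · show w 1 = w 0 / v 0 * v 1
        field_simp
        linear_combination -hdet
  · rintro ⟨a, rfl⟩
    rw [dotProduct_smul, smul_eq_mul, h0, mul_zero]

private lemma vmv_prod (v φ : Fin 2 → F) (L : List (Matrix (Fin 2) (Fin 2) F)) :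
    vecMulVec v φ * (L.map (· * vecMulVec v φ)).prod
      = (L.map (fun m => φ ⬝ᵥ m.mulVec v)).prod • vecMulVec v φ := by
  induction L with
  | nil => simp
  | cons m L ih =>
    simp only [List.map_cons, List.prod_cons, ← mul_assoc, vmv_sandwich,
      smul_mul_assoc, ih]
    rw [smul_smul]

/-- decomposition of a rank-one square-zero 2×2 matrix -/
private lemma decomp {h : Matrix (Fin 2) (Fin 2) F} (hr : h.rank = 1) (h2 : h * h = 0) :
    ∃ v φ : Fin 2 → F, v ≠ 0 ∧ φ ≠ 0 ∧ φ ⬝ᵥ v = 0 ∧ h = vecMulVec v φ := by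
  have hne : h ≠ 0 := by rintro rfl; simp at hr
  -- some column of h is nonzero, get u with h.mulVec u ≠ 0
  have : ∃ u, h.mulVec u ≠ 0 := by
    by_contra hc
    push_neg at hc
    apply hne
    ext i j
    have := congrFun (hc (Pi.single j 1)) i
    simpa [mulVec, dotProduct, Pi.single_apply, Fin.sum_univ_two] using this
  obtain ⟨u, hu⟩ := this
  set v := h.mulVec u with hv
  have hvr : v ∈ LinearMap.range h.mulVecLin := ⟨u, rfl⟩
  have hrange : LinearMap.range h.mulVecLin = Submodule.span F {v} := by
    apply (Submodule.eq_of_le_of_finrank_le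
      ((Submodule.span_singleton_le_iff_mem _ _).mpr hvr) ?_).symm
    rw [finrank_span_singleton hu]
    exact le_of_eq hr
  have hcol : ∀ j : Fin 2, ∃ a : F, h.mulVec (Pi.single j 1) = a • v := by
    intro j
    have : h.mulVec (Pi.single j 1) ∈ Submodule.span F {v} := hrange ▸ ⟨Pi.single j 1, rfl⟩
    exact (Submodule.mem_span_singleton.mp this).imp fun a ha => ha.symm
  choose φ hφ using hcol
  have hh : h = vecMulVec v φ := by
    ext i j
    have := congrFun (hφ j) i
    simp only [mulVec, dotProduct, Pi.single_apply, Fin.sum_univ_two] at this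
    fin_cases j <;>
      simpa [vecMulVec_apply, mul_comm] using this
  have hφne : φ ≠ 0 := by
    rintro rfl
    apply hne
    rw [hh]
    ext i j; simp [vecMulVec_apply]
  have hortho : φ ⬝ᵥ v = 0 := by
    have hz : h.mulVec v = 0 := by
      rw [hv, mulVec_mulVec, h2, zero_mulVec]
    rw [hh, vmv_mulVec] at hz
    rcases smul_eq_zero.mp hz with h | h
    · exact h
    · exact absurd h hu
  exact ⟨v, φ, hu, hφne, hortho, hh⟩

end Stmt9Aux
namespace Stmt9Aux

variable {F : Type*} [Field F]

/-- master lemma: for a decomposed h, the scalar criteria -/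
private lemma sandwich_ne_zero_iff {v φ : Fin 2 → F} (hv : v ≠ 0) (hφ : φ ≠ 0)
    (m : Matrix (Fin 2) (Fin 2) F) :
    vecMulVec v φ * m * vecMulVec v φ ≠ 0 ↔ φ ⬝ᵥ m.mulVec v ≠ 0 := by
  rw [vmv_sandwich, smul_ne_zero_iff]
  have : vecMulVec v φ ≠ 0 := by
    obtain ⟨i, hi⟩ := Function.ne_iff.mp hv
    obtain ⟨j, hj⟩ := Function.ne_iff.mp hφ
    intro h
    have := congrFun (congrFun h i) j
    simp only [vecMulVec_apply, Matrix.zero_apply] at this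
    exact (mul_ne_zero hi hj) this
  tauto

private lemma main {k : ℕ} (c : Fin k → GL (Fin 2) F) {v φ : Fin 2 → F}
    (hv : v ≠ 0) (hφ : φ ≠ 0) (h0 : φ ⬝ᵥ v = 0) :
    ((∀ j, ¬∃ a : F, ((c j : Matrix (Fin 2) (Fin 2) F)).mulVec v = a • v) ↔
     (∀ j, φ ⬝ᵥ ((c j : Matrix (Fin 2) (Fin 2) F)).mulVec v ≠ 0)) := by
  refine forall_congr' fun j => ?_
  rw [not_iff_comm, not_not, ortho hv hφ h0]

end Stmt9Aux

open Matrix Stmt9Aux in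
/-- For constants `c₁, …, c_{l-1} ∈ GL₂(q)` (here `c : Fin k → GL (Fin 2) F`),
the following are equivalent:
(i) the union of the fixed-point sets on the projective line `P(F_q²)` of the images of the
`c j` in `PGL₂(q)` is not all of `P(F_q²)`, i.e. there is a nonzero vector `v` spanning a
line fixed by none of the `c j`;
(ii) there is a rank-one matrix `h` with `h² = 0` and `h * c j * h ≠ 0` for all `j`;
(iii) there is a rank-one matrix `h` with `h² = 0` and `h * c₁ * h * c₂ * h ⋯ h * c_{l-1} * h ≠ 0`. -/
theorem stmt9 {F : Type*} [Field F] [Fintype F] {k : ℕ} (c : Fin k → GL (Fin 2) F) :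
    ((∃ v : Fin 2 → F, v ≠ 0 ∧
        ∀ j, ¬∃ a : F, ((c j : Matrix (Fin 2) (Fin 2) F)).mulVec v = a • v) ↔
      (∃ h : Matrix (Fin 2) (Fin 2) F, h.rank = 1 ∧ h * h = 0 ∧
        ∀ j, h * (c j : Matrix (Fin 2) (Fin 2) F) * h ≠ 0)) ∧
    ((∃ v : Fin 2 → F, v ≠ 0 ∧
        ∀ j, ¬∃ a : F, ((c j : Matrix (Fin 2) (Fin 2) F)).mulVec v = a • v) ↔
      (∃ h : Matrix (Fin 2) (Fin 2) F, h.rank = 1 ∧ h * h = 0 ∧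
        h * (List.ofFn fun j : Fin k =>
          (c j : Matrix (Fin 2) (Fin 2) F) * h).prod ≠ 0)) := by
  -- the product criterion for a decomposed h
  have prodcrit : ∀ (v φ : Fin 2 → F), v ≠ 0 → φ ≠ 0 →
      (vecMulVec v φ * (List.ofFn fun j : Fin k =>
          (c j : Matrix (Fin 2) (Fin 2) F) * vecMulVec v φ).prod ≠ 0 ↔
        ∀ j, φ ⬝ᵥ ((c j : Matrix (Fin 2) (Fin 2) F)).mulVec v ≠ 0) := by
    intro v φ hv hφ
    have hL : (List.ofFn fun j : Fin k => (c j : Matrix (Fin 2) (Fin 2) F) * vecMulVec v φ)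
        = (List.ofFn fun j : Fin k => (c j : Matrix (Fin 2) (Fin 2) F)).map
            (· * vecMulVec v φ) := by
      rw [List.map_ofFn]; rfl
    rw [hL, vmv_prod, List.map_ofFn]
    simp only [Function.comp_def]
    have hvmv : vecMulVec v φ ≠ 0 := by
      obtain ⟨i, hi⟩ := Function.ne_iff.mp hv
      obtain ⟨j, hj⟩ := Function.ne_iff.mp hφ
      intro h
      have := congrFun (congrFun h i) j
      simp only [vecMulVec_apply, Matrix.zero_apply] at this
      exact (mul_ne_zero hi hj) this
    rw [smul_ne_zero_iff]
    constructor
    · rintro ⟨hp, -⟩ j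
      intro hz
      apply hp
      rw [List.prod_eq_zero_iff]
      rw [List.mem_ofFn]
      exact ⟨j, hz⟩
    · intro hall
      refine ⟨?_, hvmv⟩
      intro hz
      rw [List.prod_eq_zero_iff, List.mem_ofFn] at hz
      obtain ⟨j, hj⟩ := hz
      exact hall j (by rw [← hj])
  constructor
  · constructor
    · rintro ⟨v, hv, hfix⟩
      set φ : Fin 2 → F := ![v 1, -v 0] with hφdef
      have h0 : φ ⬝ᵥ v = 0 := by simp [hφdef, dotProduct, Fin.sum_univ_two]; ring
      have hφ : φ ≠ 0 := by
        obtain ⟨i, hi⟩ := Function.ne_iff.mp hv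
        intro h
        apply hv; funext i'
        fin_cases i'
        · have := congrFun h 1; simpa [hφdef, neg_eq_zero] using this
        · have := congrFun h 0; simpa [hφdef] using this
      refine ⟨vecMulVec v φ, rank_vmv hv hφ, ?_, fun j => ?_⟩
      · have := vmv_sandwich v φ 1
        simpa [Matrix.one_mulVec, h0] using this
      · rw [sandwich_ne_zero_iff hv hφ]
        exact ((main c hv hφ h0).mp hfix) j
    · rintro ⟨h, hr, h2, hcrit⟩
      obtain ⟨v, φ, hv, hφ, h0, rfl⟩ := decomp hr h2
      refine ⟨v, hv, (main c hv hφ h0).mpr fun j => ?_⟩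
      exact (sandwich_ne_zero_iff hv hφ _).mp (hcrit j)
  · constructor
    · rintro ⟨v, hv, hfix⟩
      set φ : Fin 2 → F := ![v 1, -v 0] with hφdef
      have h0 : φ ⬝ᵥ v = 0 := by simp [hφdef, dotProduct, Fin.sum_univ_two]; ring
      have hφ : φ ≠ 0 := by
        obtain ⟨i, hi⟩ := Function.ne_iff.mp hv
        intro h
        apply hv; funext i'
        fin_cases i'
        · have := congrFun h 1; simpa [hφdef, neg_eq_zero] using this
        · have := congrFun h 0; simpa [hφdef] using this
      refine ⟨vecMulVec v φ, rank_vmv hv hφ, ?_, ?_⟩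
      · have := vmv_sandwich v φ 1
        simpa [Matrix.one_mulVec, h0] using this
      · exact (prodcrit v φ hv hφ).mpr ((main c hv hφ h0).mp hfix)
    · rintro ⟨h, hr, h2, hcrit⟩
      obtain ⟨v, φ, hv, hφ, h0, rfl⟩ := decomp hr h2
      exact ⟨v, hv, (main c hv hφ h0).mpr ((prodcrit v φ hv hφ).mp hcrit)⟩
end

section
/- Let q = p^e be a prime power. Every g ∈ SL₂(q) satisfies one of: g^{q-1} is central, g^{q+1} is central, or g^p is central in SL₂(q). Consequently the word v(x,y) = [[[x,y^p],y^{-(q-1)}],y^{q+1}] ∈ F₂ is a law (identity without constants) for SL₂(q). -/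
open scoped commutatorElement

open Polynomial

private lemma ch2 {F : Type*} [Field F] (A : Matrix (Fin 2) (Fin 2) F) :
    A * A = A.trace • A - A.det • (1 : Matrix (Fin 2) (Fin 2) F) := by
  ext i j
  fin_cases i <;> fin_cases j <;>
    simp [Matrix.mul_apply, Matrix.trace, Matrix.det_fin_two, Fin.sum_univ_two,
      Matrix.one_apply, Matrix.diag] <;> ring

private lemma scalar_central {F : Type*} [Field F] (g : Matrix.SpecialLinearGroup (Fin 2) F)
    (c : F) (h : (↑g : Matrix (Fin 2) (Fin 2) F) = c • 1) :
    g ∈ Subgroup.center (Matrix.SpecialLinearGroup (Fin 2) F) := by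
  rw [Subgroup.mem_center_iff]
  intro k
  apply Subtype.ext
  rw [Matrix.SpecialLinearGroup.coe_mul, Matrix.SpecialLinearGroup.coe_mul, h, smul_mul_assoc, mul_smul_comm, one_mul, mul_one]

set_option maxHeartbeats 1000000 in
private lemma trichotomy {F : Type*} [Field F] [Fintype F]
    (g : Matrix.SpecialLinearGroup (Fin 2) F) :
    g ^ (Fintype.card F - 1) ∈ Subgroup.center (Matrix.SpecialLinearGroup (Fin 2) F) ∨
    g ^ (Fintype.card F + 1) ∈ Subgroup.center (Matrix.SpecialLinearGroup (Fin 2) F) ∨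
    g ^ ringChar F ∈ Subgroup.center (Matrix.SpecialLinearGroup (Fin 2) F) := by
  classical
  set q := Fintype.card F with hqdef
  set p := ringChar F with hpdef
  have hp : p.Prime := CharP.char_is_prime F p
  have hq2 : 2 ≤ q := Fintype.one_lt_card
  set G : Matrix (Fin 2) (Fin 2) F := ↑g with hGdef
  have hdet : G.det = 1 := g.prop
  set t : F := G.trace with htdef
  have hCH : G * G = t • G - 1 := by rw [ch2, hdet, one_smul]
  -- the characteristic polynomial
  set χ : F[X] := X ^ 2 - C t * X + 1 with hχdef
  have hGχ : aeval G χ = 0 := by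
    simp only [hχdef, map_add, map_sub, _root_.map_mul, _root_.map_one, map_pow, aeval_X, aeval_C,
      Algebra.algebraMap_eq_smul_one, smul_mul_assoc, one_mul]
    rw [pow_two, hCH]
    abel
  by_cases hroot : ∃ a : F, a * a - t * a + 1 = 0
  · obtain ⟨a, ha⟩ := hroot
    have ha0 : a ≠ 0 := by rintro rfl; simp at ha
    have hsum : a + a⁻¹ = t := by
      field_simp
      linear_combination ha
    by_cases haa : a = a⁻¹
    · -- scalar ± unipotent case : g ^ p is central
      right; right
      have ha2 : a * a = 1 := by nth_rewrite 2 [haa]; exact mul_inv_cancel₀ ha0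
      have ht : t = a + a := by rw [← hsum, ← haa]
      set N : Matrix (Fin 2) (Fin 2) F := G - a • 1 with hNdef
      have hN2 : N * N = 0 := by
        have expand : N * N = G * G - (a + a) • G + (a * a) • 1 := by
          simp only [hNdef, sub_mul, mul_sub, smul_mul_assoc, mul_smul_comm, one_mul, mul_one,
            smul_smul, add_smul, smul_sub]
          abel
        rw [expand, hCH, ← ht, ha2, one_smul]
        abel
      haveI := Fact.mk hp
      haveI : ExpChar (Matrix (Fin 2) (Fin 2) F) p := ExpChar.prime hp
      have hGp : G ^ p = (a ^ p) • 1 := by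
        have hcomm : Commute (a • (1 : Matrix (Fin 2) (Fin 2) F)) N :=
          (Commute.one_left N).smul_left a
        have hG : G = a • 1 + N := by simp [hNdef]
        have hNp : N ^ p = 0 := by
          have : N ^ p = N ^ 2 * N ^ (p - 2) := by
            rw [← pow_add]
            congr 1
            have := hp.two_le
            omega
          rw [this, pow_two, hN2, zero_mul]
        rw [hG, add_pow_char_of_commute (p := p) hcomm, hNp, add_zero, _root_.smul_pow, one_pow]
      exact scalar_central _ _ (by rw [Matrix.SpecialLinearGroup.coe_pow]; exact hGp)
    · -- split diagonalizable case : g ^ (q - 1) = 1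
      left
      have h1 : (X - C a) ∣ (X ^ (q - 1) - 1 : F[X]) :=
        dvd_iff_isRoot.mpr (by
          simp [IsRoot, hqdef, FiniteField.pow_card_sub_one_eq_one a ha0])
      have h2 : (X - C a⁻¹) ∣ (X ^ (q - 1) - 1 : F[X]) :=
        dvd_iff_isRoot.mpr (by
          simp [IsRoot, hqdef, FiniteField.pow_card_sub_one_eq_one a ha0, FiniteField.pow_card_sub_one_eq_one a⁻¹ (inv_ne_zero ha0)])
      have hcop : IsCoprime (X - C a) (X - C a⁻¹ : F[X]) :=
        isCoprime_X_sub_C_of_isUnit_sub (sub_ne_zero.mpr haa).isUnit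
      obtain ⟨h, hh⟩ := hcop.mul_dvd h1 h2
      have hfac : (X - C a) * (X - C a⁻¹) = χ := by
        have : (X - C a) * (X - C a⁻¹) = X ^ 2 - C (a + a⁻¹) * X + C (a * a⁻¹) := by
          simp only [map_add, _root_.map_mul]
          ring
        rw [this, hsum, mul_inv_cancel₀ ha0, _root_.map_one, hχdef]
      have hone : G ^ (q - 1) = 1 := by
        have h0 : aeval G (X ^ (q - 1) - 1 : F[X]) = 0 := by
          rw [hh, hfac, _root_.map_mul, hGχ, zero_mul]
        simp only [map_sub, map_pow, aeval_X, _root_.map_one] at h0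
        exact sub_eq_zero.mp h0
      have : g ^ (q - 1) = 1 := Subtype.ext (by
        rw [Matrix.SpecialLinearGroup.coe_pow]; exact hone.trans rfl)
      rw [this]
      exact Subgroup.one_mem _
  · -- irreducible case : g ^ (q + 1) = 1
    right; left
    push_neg at hroot
    have hmono : χ.Monic := by
      rw [hχdef]
      monicity!
    have hdeg : χ.natDegree = 2 := by
      rw [hχdef]
      compute_degree!
    have hirr : Irreducible χ := by
      rw [irreducible_iff_roots_eq_zero_of_degree_le_three (by omega) (by omega)]
      rw [Multiset.eq_zero_iff_forall_notMem]
      intro r hr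
      rw [mem_roots hmono.ne_zero, IsRoot] at hr
      refine hroot r ?_
      have := hr
      simp only [hχdef, eval_add, eval_sub, eval_pow, eval_mul, eval_X, eval_C, eval_one] at this
      linear_combination this
    haveI := Fact.mk hirr
    haveI := Fact.mk hp
    set K := AdjoinRoot χ with hKdef
    set x : K := AdjoinRoot.root χ with hxdef
    set t' : K := algebraMap F K t with ht'def
    have hx : x ^ 2 - t' * x + 1 = 0 := by
      have := AdjoinRoot.aeval_eq (f := χ) χ
      rw [AdjoinRoot.mk_self] at this
      simpa only [hχdef, map_add, map_sub, _root_.map_mul, _root_.map_one, map_pow, aeval_X, aeval_C] using this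
    haveI : CharP K p := charP_of_injective_algebraMap (algebraMap F K).injective p
    obtain ⟨n, -, hq⟩ := FiniteField.card F p
    haveI : ExpChar K p := ExpChar.prime hp
    have hfix : t' ^ q = t' := by rw [ht'def, ← map_pow, FiniteField.pow_card]
    have hxq : (x ^ q) ^ 2 - t' * x ^ q + 1 = 0 := by
      have h2 := congrArg (iterateFrobenius K p n) hx
      simp only [map_add, map_sub, _root_.map_mul, _root_.map_one, map_zero, map_pow,
        iterateFrobenius_def, ← hq] at h2
      rwa [hfix] at h2
    have hfact : (x ^ q - x) * (x ^ q - (t' - x)) = 0 := by linear_combination hxq - hx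
    rcases mul_eq_zero.mp hfact with hcase | hcase
    · exfalso
      have hxqx : x ^ q = x := sub_eq_zero.mp hcase
      have hmin : minpoly F x = χ :=
        (minpoly.eq_of_irreducible_of_monic hirr (by
          rw [AdjoinRoot.aeval_eq, AdjoinRoot.mk_self]) hmono).symm
      have hdvd : χ ∣ (X ^ q - X : F[X]) := by
        rw [← hmin]
        exact minpoly.dvd F x (by simp [map_sub, map_pow, aeval_X, hxqx])
      obtain ⟨h, hh⟩ := hdvd
      have hPne : (X ^ q - X : F[X]) ≠ 0 := by
        intro h0
        have : (X ^ q - X : F[X]).coeff q = 1 := by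
          rw [coeff_sub, coeff_X_pow, if_pos rfl, coeff_X, if_neg (by omega)]
          ring
        rw [h0, coeff_zero] at this
        exact one_ne_zero this.symm
      have hhne : h ≠ 0 := by rintro rfl; rw [mul_zero] at hh; exact hPne hh
      have hdegh : h.natDegree = q - 2 := by
        have h1 : (X ^ q - X : F[X]).natDegree = q := by
          compute_degree!
          · rw [if_neg (by omega : ¬ (1 = q))]
            norm_num
          · omega
        rw [hh, natDegree_mul hmono.ne_zero hhne, hdeg] at h1
        omega
      have hrootsh : ∀ c : F, h.IsRoot c := by
        intro c
        have h1 : eval c (X ^ q - X : F[X]) = 0 := by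
          rw [hqdef]
          simp [FiniteField.pow_card]
        rw [hh, eval_mul] at h1
        have hχc : eval c χ ≠ 0 := by
          intro h2
          simp only [hχdef, eval_add, eval_sub, eval_pow, eval_mul, eval_X, eval_C,
            eval_one] at h2
          exact hroot c (by linear_combination h2)
        exact (mul_eq_zero.mp h1).resolve_left hχc
      have hsub : (Finset.univ : Finset F) ⊆ h.roots.toFinset := fun c _ =>
        Multiset.mem_toFinset.mpr (mem_roots'.mpr ⟨hhne, hrootsh c⟩)
      have := Finset.card_le_card hsub
      rw [Finset.card_univ] at this
      have h2 := (Multiset.toFinset_card_le h.roots).trans (card_roots' h)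
      omega
    · have hxq' : x ^ q = t' - x := sub_eq_zero.mp hcase
      have hx1 : x ^ (q + 1) = 1 := by
        rw [pow_succ, hxq']
        linear_combination -hx
      have hdvd : χ ∣ (X ^ (q + 1) - 1 : F[X]) := by
        rw [← AdjoinRoot.mk_eq_zero, ← AdjoinRoot.aeval_eq]
        simp only [_root_.map_sub, _root_.map_pow, aeval_X, _root_.map_one]
        rw [← hxdef, hx1, sub_self]
      obtain ⟨h, hh⟩ := hdvd
      have hGq : G ^ (q + 1) = 1 := by
        have h0 : aeval G (X ^ (q + 1) - 1 : F[X]) = 0 := by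
          rw [hh, _root_.map_mul, hGχ, zero_mul]
        simp only [_root_.map_sub, _root_.map_pow, aeval_X, _root_.map_one] at h0
        exact sub_eq_zero.mp h0
      have : g ^ (q + 1) = 1 := Subtype.ext (by
        rw [Matrix.SpecialLinearGroup.coe_pow]; exact hGq.trans rfl)
      rw [this]
      exact Subgroup.one_mem _

/-- For `q = p^e` (so `p = ringChar F`), every `g ∈ SL₂(q)` satisfies that one
of `g^(q-1)`, `g^(q+1)`, `g^p` is central; consequently
`v(x,y) = [[[x, y^p], y^{-(q-1)}], y^{q+1}]` is a law for `SL₂(q)`. -/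
theorem stmt13 {F : Type*} [Field F] [Fintype F] :
    (∀ g : Matrix.SpecialLinearGroup (Fin 2) F,
        g ^ (Fintype.card F - 1) ∈ Subgroup.center (Matrix.SpecialLinearGroup (Fin 2) F) ∨
        g ^ (Fintype.card F + 1) ∈ Subgroup.center (Matrix.SpecialLinearGroup (Fin 2) F) ∨
        g ^ ringChar F ∈ Subgroup.center (Matrix.SpecialLinearGroup (Fin 2) F)) ∧
    ∀ x y : Matrix.SpecialLinearGroup (Fin 2) F,
      ⁅⁅⁅x, y ^ ringChar F⁆, (y ^ (Fintype.card F - 1))⁻¹⁆, y ^ (Fintype.card F + 1)⁆ = 1 := by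
  refine ⟨trichotomy, ?_⟩
  intro x y
  rcases trichotomy y with hc | hc | hc
  · have hz : (y ^ (Fintype.card F - 1))⁻¹ ∈
        Subgroup.center (Matrix.SpecialLinearGroup (Fin 2) F) :=
      (Subgroup.center _).inv_mem hc
    have h1 : ⁅⁅x, y ^ ringChar F⁆, (y ^ (Fintype.card F - 1))⁻¹⁆ = 1 :=
      commutatorElement_eq_one_iff_commute.mpr (Subgroup.mem_center_iff.mp hz _)
    rw [h1, commutatorElement_one_left]
  · exact commutatorElement_eq_one_iff_commute.mpr (Subgroup.mem_center_iff.mp hc _)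
  · have h1 : ⁅x, y ^ ringChar F⁆ = 1 :=
      commutatorElement_eq_one_iff_commute.mpr (Subgroup.mem_center_iff.mp hc _)
    rw [h1, commutatorElement_one_left, commutatorElement_one_left]
end

section
/- Let p be a prime, q = p^e, and let c be an invertible semilinear map on V = F_q^n which is semilinear with respect to the field automorphism x ↦ x^{p^m}, where 1 ≤ m ≤ e. Then the induced map on the projective space P(V) has at most (p^{m'n} - 1)/(p^{m'} - 1) fixed points, where m' = gcd(e, m). -/
private lemma pow_pow_mul_fix {F : Type*} [Monoid F] {P : ℕ} {x : F} {a : ℕ}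
    (h : x ^ P ^ a = x) : ∀ t, x ^ P ^ (a * t) = x := by
  intro t
  induction t with
  | zero => simp
  | succ t ih =>
      rw [Nat.mul_succ, pow_add, pow_mul, ih, h]

private lemma pow_pow_gcd_fix {F : Type*} [Monoid F] {P : ℕ} {x : F} :
    ∀ a b : ℕ, x ^ P ^ a = x → x ^ P ^ b = x → x ^ P ^ (Nat.gcd a b) = x := by
  intro a b
  induction a, b using Nat.gcd.induction with
  | H0 b => intro _ hb; simpa using hb
  | H1 a b ha ih =>
      intro h1 h2
      rw [Nat.gcd_rec]
      refine ih ?_ h1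
      have hb : x ^ P ^ (a * (b / a) + b % a) = x := by rw [Nat.div_add_mod]; exact h2
      rwa [pow_add, pow_mul, pow_pow_mul_fix h1] at hb

private lemma charP_of_card {p e : ℕ} [hp : Fact p.Prime] (he : 1 ≤ e) (F : Type*) [Field F]
    [Fintype F] (hcard : Fintype.card F = p ^ e) : CharP F p := by
  obtain ⟨n, hr, hc⟩ := FiniteField.card F (ringChar F)
  have hdvd : p ∣ ringChar F ^ (n : ℕ) := by
    rw [← hc, hcard]
    exact dvd_pow_self p (by omega)
  have : p = ringChar F := by
    have := hp.out.dvd_of_dvd_pow hdvd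
    exact ((Nat.prime_dvd_prime_iff_eq hp.out hr).mp this)
  rw [this]; exact ringChar.charP F

private def fixedSubfield (p : ℕ) [Fact p.Prime] (F : Type*) [Field F] [CharP F p] (m : ℕ) :
    Subfield F where
  carrier := {x | x ^ p ^ m = x}
  mul_mem' := by intro a b ha hb; simp only [Set.mem_setOf_eq] at *; rw [mul_pow, ha, hb]
  one_mem' := one_pow _
  add_mem' := by
    intro a b ha hb; simp only [Set.mem_setOf_eq] at *
    rw [add_pow_char_pow, ha, hb]
  zero_mem' := zero_pow (pow_ne_zero m (Fact.out (p := p.Prime)).ne_zero)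
  neg_mem' := by
    intro a ha; simp only [Set.mem_setOf_eq] at *
    have := map_neg (iterateFrobenius F p m) a
    simpa [iterateFrobenius_def, ha] using this
  inv_mem' := by
    intro a ha; simp only [Set.mem_setOf_eq] at *
    rw [inv_pow, ha]

private lemma card_le_of_pow_eq {F : Type*} [Field F] [Fintype F] [DecidableEq F] {q : ℕ}
    (hq : 2 ≤ q) (s : Finset F) (hs : ∀ x ∈ s, x ^ q = x) : s.card ≤ q := by
  classical
  set P : Polynomial F := Polynomial.X ^ q - Polynomial.X with hPdef
  have hP : P ≠ 0 := by
    intro h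
    have h1 : P.coeff q = 1 := by
      have hx : (Polynomial.X : Polynomial F).coeff q = 0 := by
        rw [Polynomial.coeff_X, if_neg (by omega)]
      rw [hPdef, Polynomial.coeff_sub, Polynomial.coeff_X_pow, if_pos rfl, hx, sub_zero]
    rw [h] at h1
    simp at h1
  have hsub : s ⊆ P.roots.toFinset := by
    intro x hx
    rw [Multiset.mem_toFinset, Polynomial.mem_roots hP]
    simp [Polynomial.IsRoot, hPdef, hs x hx, sub_eq_zero]
  calc s.card ≤ P.roots.toFinset.card := Finset.card_le_card hsub
    _ ≤ Multiset.card P.roots := Multiset.toFinset_card_le _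
    _ ≤ P.natDegree := P.card_roots'
    _ ≤ q := by
        refine le_trans (Polynomial.natDegree_sub_le _ _) ?_
        simp [Polynomial.natDegree_X_pow, Polynomial.natDegree_X]
        omega

private lemma geom_mul {K : ℕ} (hK : 1 ≤ K) (n : ℕ) :
    (K - 1) * (∑ i ∈ Finset.range n, K ^ i) = K ^ n - 1 := by
  induction n with
  | zero => simp
  | succ n ih =>
      rw [Finset.sum_range_succ, Nat.mul_add, ih]
      have h1 : (K - 1) * K ^ n = K * K ^ n - K ^ n := by rw [Nat.sub_mul, one_mul]
      have h2 : K ^ (n + 1) = K * K ^ n := by rw [pow_succ, mul_comm]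
      have h3 : 1 ≤ K ^ n := Nat.one_le_pow _ _ (by omega)
      have h4 : K ^ n ≤ K * K ^ n := Nat.le_mul_of_pos_left _ (by omega)
      omega

private lemma sum_pow_sub_one_le {Q : Type*} (s : Finset Q) {K : ℕ} (hK : 1 ≤ K) (d : Q → ℕ) :
    ∑ q ∈ s, (K ^ d q - 1) ≤ K ^ (∑ q ∈ s, d q) - 1 := by
  classical
  induction s using Finset.induction with
  | empty => simp
  | insert a s hq ih =>
      rw [Finset.sum_insert hq, Finset.sum_insert hq, pow_add]
      have hA : 1 ≤ K ^ d a := Nat.one_le_pow _ _ (by omega)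
      have hB : 1 ≤ K ^ (∑ q ∈ s, d q) := Nat.one_le_pow _ _ (by omega)
      obtain ⟨A, hA'⟩ := Nat.exists_eq_add_of_le hA
      obtain ⟨B, hB'⟩ := Nat.exists_eq_add_of_le hB
      have key : (1 + A) * (1 + B) = 1 + A + B + A * B := by ring
      have key2 : K ^ d a * K ^ (∑ q ∈ s, d q) = (1 + A) * (1 + B) := by rw [← hA', ← hB']
      have := ih
      omega

private lemma le_div_final {N K n q0 : ℕ} (hK2 : 2 ≤ K) (hKq : K ≤ q0)
    (h : N * (K - 1) ≤ K ^ n - 1) : N ≤ (q0 ^ n - 1) / (q0 - 1) := by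
  have hq2 : 2 ≤ q0 := le_trans hK2 hKq
  have e1 : (K ^ n - 1) / (K - 1) = ∑ i ∈ Finset.range n, K ^ i := by
    rw [← geom_mul (by omega) n, Nat.mul_div_cancel_left _ (by omega)]
  have e2 : (q0 ^ n - 1) / (q0 - 1) = ∑ i ∈ Finset.range n, q0 ^ i := by
    rw [← geom_mul (by omega) n, Nat.mul_div_cancel_left _ (by omega)]
  have h1 : N ≤ (K ^ n - 1) / (K - 1) := (Nat.le_div_iff_mul_le (by omega)).mpr h
  rw [e1] at h1
  rw [e2]
  exact h1.trans (Finset.sum_le_sum fun i _ => Nat.pow_le_pow_left hKq i)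

open Finset

private lemma key_linearIndependent {p : ℕ} [Fact p.Prime] {m : ℕ} {F : Type*} [Field F]
    {V : Type*} [AddCommGroup V] [Module F V]
    (c : V → V) (hadd : ∀ u v, c (u + v) = c u + c v)
    (hsemi : ∀ (a : F) (v : V), c (a • v) = a ^ p ^ m • c v)
    {ι : Type*} [Fintype ι] (lam : ι → F) (v : ι → V)
    (hlam0 : ∀ i, lam i ≠ 0)
    (heig : ∀ i, c (v i) = lam i • v i)
    (hsep : ∀ i j (a : F), a ≠ 0 → lam i = lam j * a ^ (p ^ m - 1) → lam i = lam j)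
    (hker : ∀ (μ : F) (g : ι → F), (∀ i, g i ≠ 0 → lam i = μ) →
        (∀ i, g i ^ p ^ m = g i) → ∑ i, g i • v i = 0 → ∀ i, g i = 0) :
    LinearIndependent F v := by
  classical
  have hP1 : 1 ≤ p ^ m := Nat.one_le_pow _ _ (Fact.out (p := p.Prime)).pos
  set P := p ^ m with hPdef
  have hPne : P ≠ 0 := by omega
  have hc0 : c 0 = 0 := by
    have := hsemi 0 0
    simpa [zero_pow hPne] using this
  have hmap : ∀ (g : ι → F), c (∑ i, g i • v i) = ∑ i, (g i ^ P * lam i) • v i := by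
    intro g
    have : ∀ s : Finset ι, c (∑ i ∈ s, g i • v i) = ∑ i ∈ s, (g i ^ P * lam i) • v i := by
      intro s
      induction s using Finset.induction with
      | empty => simpa using hc0
      | insert a s hns ih =>
          rw [Finset.sum_insert hns, Finset.sum_insert hns, hadd, ih, hsemi, heig,
            smul_smul]
    exact this univ
  rw [Fintype.linearIndependent_iff]
  suffices H : ∀ (N : ℕ) (g : ι → F), (univ.filter fun i => g i ≠ 0).card ≤ N →
      ∑ i, g i • v i = 0 → ∀ i, g i = 0 by
    intro g hg; exact H _ g le_rfl hg
  intro N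
  induction N with
  | zero =>
      intro g hcard hsum i
      by_contra hgi
      have hmem : i ∈ univ.filter fun i => g i ≠ 0 := by simp [hgi]
      have := Finset.card_pos.mpr ⟨i, hmem⟩
      omega
  | succ N ih =>
      intro g hcard hsum
      by_contra hex
      push_neg at hex
      obtain ⟨i0, hi0⟩ := hex
      set g' : ι → F := fun i => g i0 ^ P * lam i0 * g i - g i0 * (g i ^ P * lam i) with hg'
      have hsum' : ∑ i, g' i • v i = 0 := by
        have e : ∑ i, g' i • v i =
            (g i0 ^ P * lam i0) • (∑ i, g i • v i) - g i0 • (∑ i, (g i ^ P * lam i) • v i) := by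
          rw [Finset.smul_sum, Finset.smul_sum, ← Finset.sum_sub_distrib]
          exact Finset.sum_congr rfl fun i _ => by rw [smul_smul, smul_smul, ← sub_smul]
        rw [e, hsum, ← hmap g, hsum, hc0, smul_zero, smul_zero, sub_zero]
      have hsupp : ∀ i, g' i ≠ 0 → g i ≠ 0 ∧ i ≠ i0 := by
        intro i hi
        constructor
        · intro h0; apply hi; simp [hg', h0, zero_pow hPne]
        · rintro rfl; apply hi; simp only [hg']; ring
      have hcard' : (univ.filter fun i => g' i ≠ 0).card ≤ N := by
        have hsub : (univ.filter fun i => g' i ≠ 0) ⊆ (univ.filter fun i => g i ≠ 0).erase i0 := by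
          intro i hi
          rw [Finset.mem_filter] at hi
          obtain ⟨h1, h2⟩ := hsupp i hi.2
          exact Finset.mem_erase.mpr ⟨h2, by simp [h1]⟩
        have h3 := Finset.card_le_card hsub
        have hmem : i0 ∈ univ.filter fun i => g i ≠ 0 := by simp [hi0]
        have h4 := Finset.card_erase_of_mem hmem
        omega
      have hzero := ih g' hcard' hsum'
      have hstar : ∀ i, g i0 ^ P * lam i0 * g i = g i0 * (g i ^ P * lam i) := by
        intro i
        have := hzero i
        rwa [hg', sub_eq_zero] at this
      have hmu : ∀ i, g i ≠ 0 → lam i = lam i0 := by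
        intro i hgi
        apply hsep i i0 (g i0 / g i) (div_ne_zero hi0 hgi)
        have h1 := hstar i
        have hcan : ∀ (x : F), x ^ (P - 1) * x = x ^ P := by
          intro x; rw [← pow_succ, Nat.sub_add_cancel hP1]
        rw [div_pow, mul_div_assoc', eq_div_iff (pow_ne_zero _ hgi)]
        apply mul_left_cancel₀ (mul_ne_zero hi0 hgi)
        have e1 := hcan (g i)
        have e2 := hcan (g i0)
        linear_combination lam i * g i0 * e1 - lam i0 * g i * e2 - h1
      have hkcoef : ∀ i, (g i / g i0) ^ P = g i / g i0 := by
        intro i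
        by_cases hgi : g i = 0
        · simp [hgi, zero_pow hPne]
        · have h1 := hstar i
          rw [hmu i hgi] at h1
          rw [div_pow, div_eq_div_iff (pow_ne_zero _ hi0) hi0]
          apply mul_left_cancel₀ (hlam0 i0)
          linear_combination -h1
      have hGsum : ∑ i, (g i / g i0) • v i = 0 := by
        have e : ∑ i, (g i / g i0) • v i = (g i0)⁻¹ • ∑ i, g i • v i := by
          rw [Finset.smul_sum]
          exact Finset.sum_congr rfl fun i _ => by rw [smul_smul, div_eq_inv_mul]
        rw [e, hsum, smul_zero]
      have hfin := hker (lam i0) (fun i => g i / g i0)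
          (fun i hi => hmu i (by intro h0; exact hi (by simp [h0]))) hkcoef hGsum i0
      rw [div_self hi0] at hfin
      exact one_ne_zero hfin


open Module Finset

set_option maxHeartbeats 1000000 in
set_option synthInstance.maxHeartbeats 400000 in
/-- Let `q = p^e` and let `c` be an invertible map on an `n`-dimensional
`F_q`-vector space `V` which is semilinear with respect to `x ↦ x^(p^m)` (`1 ≤ m ≤ e`).
Then the induced map on the projective space `P(V)` has at most
`(p^(m'n) - 1)/(p^(m') - 1)` fixed points (lines `L` with `c(L) = L`), where
`m' = gcd(e, m)`. -/
theorem stmt14 {p : ℕ} [Fact p.Prime] {e m n : ℕ} (hm1 : 1 ≤ m) (hme : m ≤ e)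
    {F : Type*} [Field F] [Fintype F] (hcard : Fintype.card F = p ^ e)
    {V : Type*} [AddCommGroup V] [Module F V] [FiniteDimensional F V]
    (hdim : Module.finrank F V = n)
    (c : V → V) (hbij : Function.Bijective c)
    (hadd : ∀ u v, c (u + v) = c u + c v)
    (hsemi : ∀ (a : F) (v : V), c (a • v) = a ^ p ^ m • c v) :
    Nat.card {L : Submodule F V // Module.finrank F ↥L = 1 ∧ ∀ v ∈ L, c v ∈ L} ≤
      (p ^ (Nat.gcd e m * n) - 1) / (p ^ Nat.gcd e m - 1) := by
  classical
  have hp : p.Prime := Fact.out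
  have he : 1 ≤ e := le_trans hm1 hme
  haveI : CharP F p := charP_of_card he F hcard
  have hP1 : 1 ≤ p ^ m := Nat.one_le_pow _ _ hp.pos
  have hm'1 : 1 ≤ Nat.gcd e m := Nat.gcd_pos_of_pos_left m (by omega)
  have hq02 : 2 ≤ p ^ Nat.gcd e m :=
    le_trans hp.two_le (Nat.le_self_pow (by omega) p)
  set k : Subfield F := fixedSubfield p F m with hk
  have hkmem : ∀ x : F, x ∈ k ↔ x ^ p ^ m = x := fun x => Iff.rfl
  -- basic facts about c
  have hc0 : c 0 = 0 := by
    have := hsemi 0 0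
    simpa [zero_pow (show p ^ m ≠ 0 by omega)] using this
  -- cardinality of k
  haveI : Fintype ↥k := Fintype.ofFinite _
  have hcardk2 : 2 ≤ Fintype.card ↥k := by
    have : Nontrivial ↥k := ⟨0, 1, by
      intro h
      exact zero_ne_one (congrArg (Subtype.val) h)⟩
    exact Fintype.one_lt_card
  have hcardkq0 : Fintype.card ↥k ≤ p ^ Nat.gcd e m := by
    set s : Finset F := univ.filter (fun x => x ^ p ^ Nat.gcd e m = x) with hs
    have h1 : Fintype.card ↥k ≤ s.card := by
      have : Fintype.card ↥k ≤ Fintype.card {x : F // x ∈ s} := by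
        apply Fintype.card_le_of_injective
          (fun x => ⟨x.1, by
            rw [hs, Finset.mem_filter]
            refine ⟨Finset.mem_univ _, ?_⟩
            apply pow_pow_gcd_fix e m
            · rw [← hcard]; exact FiniteField.pow_card _
            · exact x.2⟩)
        intro a b hab
        apply Subtype.ext
        exact congrArg (Subtype.val : {x : F // x ∈ s} → F) hab
      simpa [Fintype.card_coe] using this
    exact h1.trans (card_le_of_pow_eq hq02 s (fun x hx => (Finset.mem_filter.mp hx).2))
  -- finiteness
  haveI : Finite V := Module.finite_of_finite F
  haveI : Fintype V := Fintype.ofFinite V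
  haveI : Finite (Submodule F V) := Finite.of_injective _ SetLike.coe_injective
  set S := {L : Submodule F V // Module.finrank F ↥L = 1 ∧ ∀ v ∈ L, c v ∈ L} with hS
  haveI : Finite S := Subtype.finite
  haveI : Fintype S := Fintype.ofFinite S
  -- choose spanning eigenvectors
  have hchoice : ∀ L : S, ∃ (w : V) (l : F), w ∈ L.1 ∧ w ≠ 0 ∧ l ≠ 0 ∧ c w = l • w ∧
      ∀ x ∈ L.1, ∃ a : F, x = a • w := by
    rintro ⟨L, h1, h2⟩
    obtain ⟨v0, hv0ne, hv0span⟩ := finrank_eq_one_iff'.mp h1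
    have hv0V : (v0 : V) ≠ 0 := fun h => hv0ne (Subtype.ext h)
    have hcv0 : c (v0 : V) ∈ L := h2 _ v0.2
    obtain ⟨l, hl⟩ := hv0span ⟨c (v0 : V), hcv0⟩
    have hlV : c (v0 : V) = l • (v0 : V) := by
      have := congrArg Subtype.val hl
      simpa using this.symm
    have hlne : l ≠ 0 := by
      rintro rfl
      rw [zero_smul] at hlV
      have : (v0 : V) = 0 := by
        apply hbij.injective
        rw [hlV, hc0]
      exact hv0V this
    refine ⟨v0, l, v0.2, hv0V, hlne, hlV, ?_⟩
    intro x hx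
    obtain ⟨a, ha⟩ := hv0span ⟨x, hx⟩
    exact ⟨a, by simpa using (congrArg Subtype.val ha).symm⟩
  choose vv ll hvmem hvne hlne heig hspan using hchoice
  -- the equivalence relation (same coset of (p^m-1)-powers)
  set r : S → S → Prop := fun L L' => ∃ a : F, a ≠ 0 ∧ ll L = ll L' * a ^ (p ^ m - 1) with hr
  have hrequiv : Equivalence r := by
    constructor
    · intro L; exact ⟨1, one_ne_zero, by simp⟩
    · rintro L L' ⟨a, ha, hEq⟩
      refine ⟨a⁻¹, inv_ne_zero ha, ?_⟩
      rw [hEq, inv_pow, mul_assoc, mul_inv_cancel₀ (pow_ne_zero _ ha), mul_one]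
    · rintro L L' L'' ⟨a, ha, h1⟩ ⟨b, hb, h2⟩
      exact ⟨a * b, mul_ne_zero ha hb, by rw [h1, h2, mul_pow]; ring⟩
  set sd : Setoid S := ⟨r, hrequiv⟩ with hsd
  haveI : Finite (Quotient sd) := Quotient.finite sd
  haveI : Fintype (Quotient sd) := Fintype.ofFinite _
  set lamq : Quotient sd → F := fun q => ll q.out with hlamq
  have hlamq0 : ∀ q, lamq q ≠ 0 := fun q => hlne _
  -- the fixed spaces as k-submodules
  have hsmulk : ∀ (u : ↥k) (x : V), u • x = (u : F) • x := fun u x => rfl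
  set Fx : F → Submodule ↥k V := fun μ =>
    { carrier := {x : V | c x = μ • x}
      add_mem' := by
        intro a b ha hb
        simp only [Set.mem_setOf_eq] at *
        rw [hadd, ha, hb, smul_add]
      zero_mem' := by simp only [Set.mem_setOf_eq]; rw [hc0, smul_zero]
      smul_mem' := by
        intro u x hx
        simp only [Set.mem_setOf_eq] at *
        rw [hsmulk, hsemi, hx, ((hkmem u).mp u.2 : (u:F) ^ p ^ m = (u:F)), smul_comm] } with hFx
  have hFxmem : ∀ (μ : F) (x : V), x ∈ Fx μ ↔ c x = μ • x := fun μ x => Iff.rfl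
  haveI : ∀ μ, Module.Finite ↥k ↥(Fx μ) := fun μ => Module.Finite.of_finite
  haveI : ∀ μ, Fintype ↥(Fx μ) := fun μ => Fintype.ofFinite _
  set d : Quotient sd → ℕ := fun q => finrank ↥k ↥(Fx (lamq q)) with hd
  set bas : (q : Quotient sd) → Basis (Fin (d q)) ↥k ↥(Fx (lamq q)) :=
    fun q => Module.finBasis ↥k ↥(Fx (lamq q)) with hbas
  -- family: union of the bases of the fixed spaces
  set fam : ((q : Quotient sd) × Fin (d q)) → V :=
    fun i => ((bas i.1 i.2 : ↥(Fx (lamq i.1))) : V) with hfam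
  set lamf : ((q : Quotient sd) × Fin (d q)) → F := fun i => lamq i.1 with hlamf
  have hlamq_inj : ∀ q q' : Quotient sd, ∀ a : F, a ≠ 0 →
      lamq q = lamq q' * a ^ (p ^ m - 1) → q = q' := by
    intro q q' a ha hEq
    have hrel : r q.out q'.out := ⟨a, ha, hEq⟩
    have h2 : (⟦q.out⟧ : Quotient sd) = ⟦q'.out⟧ := Quotient.sound hrel
    rwa [Quotient.out_eq, Quotient.out_eq] at h2
  have li : LinearIndependent F fam := by
    apply key_linearIndependent c hadd hsemi lamf fam (fun i => hlamq0 i.1)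
    · intro i
      exact (hFxmem _ _).mp (bas i.1 i.2).2
    · intro i j a ha hEq
      exact congrArg lamq (hlamq_inj i.1 j.1 a ha hEq)
    · intro μ g hg1 hg2 hgsum i
      by_contra hgi
      have hqi : ∀ j, g j ≠ 0 → j.1 = i.1 := by
        intro j hgj
        exact hlamq_inj j.1 i.1 1 one_ne_zero
          (by rw [one_pow, mul_one]; rw [show lamq j.1 = lamf j from rfl,
            show lamq i.1 = lamf i from rfl, hg1 j hgj, hg1 i hgi])
      set h : Fin (d i.1) → ↥k := fun j => ⟨g ⟨i.1, j⟩, (hkmem _).mpr (hg2 _)⟩ with hh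
      have hsum0 : ∑ j, h j • (bas i.1 j) = 0 := by
        apply Subtype.ext
        have hcoe : ((∑ j, h j • (bas i.1 j) : ↥(Fx (lamq i.1))) : V)
            = ∑ j, g ⟨i.1, j⟩ • fam ⟨i.1, j⟩ := by
          push_cast
          rfl
        rw [hcoe]
        have hsplit : (0 : V) = ∑ j, g j • fam j := hgsum.symm
        rw [← Finset.univ_sigma_univ, Finset.sum_sigma] at hsplit
        rw [Finset.sum_eq_single i.1 (fun q _ hq => Finset.sum_eq_zero fun x _ => by
          have : g ⟨q, x⟩ = 0 := by
            by_contra hgx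
            exact hq (hqi _ hgx)
          rw [this, zero_smul]) (fun hq => absurd (Finset.mem_univ _) hq)] at hsplit
        exact hsplit.symm.trans rfl
      have hli := (bas i.1).linearIndependent
      rw [Fintype.linearIndependent_iff] at hli
      have hz := hli h hsum0 i.2
      apply hgi
      have : g ⟨i.1, i.2⟩ = 0 := by
        have := congrArg Subtype.val hz
        simpa [hh] using this
      rwa [Sigma.eta] at this
  have hdsum : ∑ q, d q ≤ n := by
    have h1 := li.fintype_card_le_finrank
    rw [Fintype.card_sigma, hdim] at h1
    simpa using h1
  -- cardinality of fixed spaces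
  have hcardFx : ∀ q, Fintype.card ↥(Fx (lamq q)) = Fintype.card ↥k ^ d q := fun q =>
    card_eq_pow_finrank
  -- per-class counting
  have hclass : ∀ q : Quotient sd,
      (Nat.card {L : S // (⟦L⟧ : Quotient sd) = q}) * (Fintype.card ↥k - 1) ≤
        Fintype.card ↥k ^ d q - 1 := by
    intro q
    have hnorm : ∀ L : {L : S // (⟦L⟧ : Quotient sd) = q}, ∃ w : V,
        w ∈ (L.1.1 : Submodule F V) ∧ w ≠ 0 ∧ c w = lamq q • w := by
      rintro ⟨L, hL⟩
      have hrel : r L q.out := Quotient.mk_eq_iff_out.mp hL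
      obtain ⟨a, ha, hEq⟩ := hrel
      refine ⟨a⁻¹ • vv L, Submodule.smul_mem _ _ (hvmem L),
        smul_ne_zero (inv_ne_zero ha) (hvne L), ?_⟩
      rw [hsemi, heig L, hEq, smul_smul, smul_smul]
      congr 1
      have hstep : a ^ (p ^ m - 1) * a = a ^ p ^ m := by
        rw [← pow_succ, Nat.sub_add_cancel hP1]
      rw [inv_pow]
      field_simp
      linear_combination lamq q * hstep
    choose ww hwmem hwne hweig using hnorm
    set Φ : {L : S // (⟦L⟧ : Quotient sd) = q} × {u : ↥k // u ≠ 0} →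
        {x : ↥(Fx (lamq q)) // x ≠ 0} :=
      fun Lu => ⟨⟨(Lu.2.1 : F) • ww Lu.1, by
          rw [hFxmem, hsemi, hweig, ((hkmem _).mp Lu.2.1.2 : ((Lu.2.1 : F)) ^ p ^ m = _),
            smul_comm]⟩, by
          intro h0
          have h1 : (Lu.2.1 : F) • ww Lu.1 = 0 := congrArg Subtype.val h0
          rcases smul_eq_zero.mp h1 with h | h
          · exact Lu.2.2 (Subtype.ext h)
          · exact hwne Lu.1 h⟩ with hΦ
    have hΦinj : Function.Injective Φ := by
      rintro ⟨L, u⟩ ⟨L', u'⟩ hLu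
      have hvect : (u.1 : F) • ww L = (u'.1 : F) • ww L' := by
        have := congrArg (fun z : {x : ↥(Fx (lamq q)) // x ≠ 0} => ((z.1 : ↥(Fx (lamq q))) : V)) hLu
        simpa [hΦ] using this
      have hne1 : (u.1 : F) • ww L ≠ 0 := by
        intro h0
        rcases smul_eq_zero.mp h0 with h | h
        · exact u.2 (Subtype.ext h)
        · exact hwne L h
      have hspan1 : Submodule.span F {(u.1 : F) • ww L} = L.1.1 := by
        apply Submodule.eq_of_le_of_finrank_eq
        · rw [Submodule.span_le, Set.singleton_subset_iff]
          exact Submodule.smul_mem _ _ (hwmem L)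
        · rw [finrank_span_singleton hne1, L.1.2.1]
      have hspan2 : Submodule.span F {(u.1 : F) • ww L} = L'.1.1 := by
        rw [hvect]
        apply Submodule.eq_of_le_of_finrank_eq
        · rw [Submodule.span_le, Set.singleton_subset_iff]
          exact Submodule.smul_mem _ _ (hwmem L')
        · rw [finrank_span_singleton (hvect ▸ hne1), L'.1.2.1]
      have hLL' : L = L' := by
        apply Subtype.ext
        apply Subtype.ext
        rw [← hspan1, ← hspan2]
      subst hLL'
      have huu' : u = u' := by
        apply Subtype.ext
        apply Subtype.ext
        exact smul_left_injective F (hwne L) hvect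
      rw [huu']
    have hcount := Nat.card_le_card_of_injective Φ hΦinj
    rw [Nat.card_prod, Nat.card_eq_fintype_card, Nat.card_eq_fintype_card,
      Nat.card_eq_fintype_card] at hcount
    have hcu : Fintype.card {u : ↥k // u ≠ 0} = Fintype.card ↥k - 1 := by
      rw [Fintype.card_subtype_compl, Fintype.card_subtype_eq]
    have hcx : Fintype.card {x : ↥(Fx (lamq q)) // x ≠ 0} = Fintype.card ↥k ^ d q - 1 := by
      rw [Fintype.card_subtype_compl, Fintype.card_subtype_eq, hcardFx]
    rw [hcu, hcx] at hcount
    rw [Nat.card_eq_fintype_card]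
    exact hcount
  have htot : Nat.card S = ∑ q, Nat.card {L : S // (⟦L⟧ : Quotient sd) = q} := by
    rw [Nat.card_eq_fintype_card]
    calc Fintype.card S
        = Fintype.card ((q : Quotient sd) × {L : S // (⟦L⟧ : Quotient sd) = q}) :=
          (Fintype.card_congr (Equiv.sigmaFiberEquiv (fun L : S => (⟦L⟧ : Quotient sd)))).symm
      _ = ∑ q, Fintype.card {L : S // (⟦L⟧ : Quotient sd) = q} := Fintype.card_sigma
      _ = ∑ q, Nat.card {L : S // (⟦L⟧ : Quotient sd) = q} := by
          exact Finset.sum_congr rfl fun q _ => (Nat.card_eq_fintype_card).symm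
  have hchain : Nat.card S * (Fintype.card ↥k - 1) ≤ Fintype.card ↥k ^ n - 1 := by
    rw [htot, Finset.sum_mul]
    calc ∑ q, Nat.card {L : S // (⟦L⟧ : Quotient sd) = q} * (Fintype.card ↥k - 1)
        ≤ ∑ q, (Fintype.card ↥k ^ d q - 1) := Finset.sum_le_sum fun q _ => hclass q
      _ ≤ Fintype.card ↥k ^ (∑ q, d q) - 1 := sum_pow_sub_one_le univ (by omega) d
      _ ≤ Fintype.card ↥k ^ n - 1 :=
          Nat.sub_le_sub_right (Nat.pow_le_pow_right (by omega) hdsum) 1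
  have := le_div_final hcardk2 hcardkq0 hchain
  rwa [← pow_mul] at this
end

section
/- Let R be a commutative ring of characteristic ≠ 2 and m ≥ 2. Let g₀ = diag(J, 1_{m-2}, J, 1_{m-2}) ∈ Sp_{2m}(R) where J = [[0,1],[1,0]], and let k = 1_{2m} + e_{1,m+1} be the standard symplectic transvection. Then for every x ∈ Sp_{2m}(R), the elements g₀^x k g₀^x and k commute; equivalently, w(x) = [g₀^x k g₀^x, k] is a mixed identity of length 8 for Sp_{2m}(R). -/
/-- The Gram matrix `Ω = [[0, 1_m], [-1_m, 0]]` of the standard alternating form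
`f(u,v) = u Ω vᵀ` on `R^{2m}` (rows indexed by `Fin m ⊕ Fin m`). -/
def OmegaMat (m : ℕ) (R : Type*) [CommRing R] :
    Matrix (Fin m ⊕ Fin m) (Fin m ⊕ Fin m) R :=
  Matrix.fromBlocks 0 1 (-1) 0

open Matrix in
/-- `e_{ab} M e_{ab} = M_{ba} e_{ab}`. -/
lemma aux_EME {R : Type*} [CommRing R] {n : Type*} [Fintype n] [DecidableEq n] (a b : n)
    (M : Matrix n n R) :
    single a b (1:R) * M * single a b 1 = single a b (M b a) := by
  ext i j
  simp [Matrix.single, Matrix.mul_apply, ite_and, Finset.sum_ite_eq, Finset.mul_sum]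
  by_cases h1 : a = i <;> by_cases h2 : b = j <;> simp [h1, h2]

open Matrix in
lemma aux_perm_mul {R : Type*} [CommRing R] {n : Type*} [Fintype n] [DecidableEq n]
    (σ : n → n) (M : Matrix n n R) (i j : n) :
    ((Matrix.of fun i j => if j = σ i then (1:R) else 0) * M) i j = M (σ i) j := by
  simp [Matrix.mul_apply]

open Matrix in
lemma aux_mul_perm {R : Type*} [CommRing R] {n : Type*} [Fintype n] [DecidableEq n]
    (σ : n → n) (hσ : ∀ i, σ (σ i) = i) (M : Matrix n n R) (i j : n) :
    (M * (Matrix.of fun i j => if j = σ i then (1:R) else 0)) i j = M i (σ j) := by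
  have h : ∀ k, (j = σ k) = (k = σ j) := by
    intro k
    apply propext
    constructor
    · rintro rfl; exact (hσ k).symm
    · rintro rfl; exact (hσ j).symm
  simp only [Matrix.mul_apply, Matrix.of_apply, h]
  simp

open Matrix in
/-- The `(m+1, 1)` entry of a symplectic involution vanishes (char ≠ 2). -/
lemma aux_key_entry {R : Type*} [CommRing R] {m : ℕ}
    (h2 : ∀ x : R, 2 * x = 0 → x = 0) (h0 : 0 < m)
    (g : Matrix (Fin m ⊕ Fin m) (Fin m ⊕ Fin m) R)
    (hinv : g * g = 1) (hsymp : g * OmegaMat m R * g.transpose = OmegaMat m R) :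
    g (Sum.inr ⟨0, h0⟩) (Sum.inl ⟨0, h0⟩) = 0 := by
  set a : Fin m ⊕ Fin m := Sum.inl ⟨0, h0⟩ with ha
  set b : Fin m ⊕ Fin m := Sum.inr ⟨0, h0⟩ with hb
  have hcomm : OmegaMat m R * g.transpose = g * OmegaMat m R := by
    have := congrArg (g * ·) hsymp
    simp only [← Matrix.mul_assoc, hinv, one_mul] at this
    exact this
  have e1 : (OmegaMat m R * g.transpose) b b = -(g b a) := by
    simp [Matrix.mul_apply, OmegaMat, Fintype.sum_sum_type, Matrix.one_apply, hb, ha]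
  have e2 : (g * OmegaMat m R) b b = g b a := by
    simp [Matrix.mul_apply, OmegaMat, Fintype.sum_sum_type, Matrix.one_apply, hb, ha]
  have h : -(g b a) = g b a := by rw [← e1, ← e2, hcomm]
  apply h2
  linear_combination -h

/-- Let `R` be a commutative ring of characteristic `≠ 2` and `m ≥ 2`. Let
`g₀ = diag(J, 1_{m-2}, J, 1_{m-2})` (the permutation matrix swapping the first two
coordinates in each block, `J = [[0,1],[1,0]]`), and let `k = 1 + e_{1,m+1}` be the standard
symplectic transvection. Then `g₀, k ∈ Sp_{2m}(R)`, and for every `x ∈ Sp_{2m}(R)` the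
elements `g₀^x k g₀^x` and `k` commute; i.e. `w(x) = [g₀^x k g₀^x, k]` is a mixed identity
of length 8 for `Sp_{2m}(R)`. -/
theorem stmt16 {R : Type*} [CommRing R] (h2 : ∀ x : R, 2 * x = 0 → x = 0)
    {m : ℕ} (hm : 2 ≤ m)
    (g₀ k : Matrix (Fin m ⊕ Fin m) (Fin m ⊕ Fin m) R)
    (hg₀ : g₀ = Matrix.of fun i j =>
      if j = Sum.map (⇑(Equiv.swap (⟨0, by omega⟩ : Fin m) ⟨1, by omega⟩))
          (⇑(Equiv.swap (⟨0, by omega⟩ : Fin m) ⟨1, by omega⟩)) i then (1 : R) else 0)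
    (hk : k = 1 + Matrix.single (Sum.inl (⟨0, by omega⟩ : Fin m))
      (Sum.inr (⟨0, by omega⟩ : Fin m)) (1 : R)) :
    g₀ * OmegaMat m R * g₀.transpose = OmegaMat m R ∧
    k * OmegaMat m R * k.transpose = OmegaMat m R ∧
    ∀ x : Matrix (Fin m ⊕ Fin m) (Fin m ⊕ Fin m) R,
      x * OmegaMat m R * x.transpose = OmegaMat m R →
      Commute ((x⁻¹ * g₀ * x) * k * (x⁻¹ * g₀ * x)) k := by
  have h0 : 0 < m := by omega
  have h1 : 1 < m := by omega
  set s : Equiv.Perm (Fin m) := Equiv.swap ⟨0, h0⟩ ⟨1, h1⟩ with hs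
  set σ : Fin m ⊕ Fin m → Fin m ⊕ Fin m := Sum.map ⇑s ⇑s with hσ
  set a : Fin m ⊕ Fin m := Sum.inl ⟨0, h0⟩ with ha
  set b : Fin m ⊕ Fin m := Sum.inr ⟨0, h0⟩ with hb
  set E : Matrix (Fin m ⊕ Fin m) (Fin m ⊕ Fin m) R := Matrix.single a b 1 with hE
  have hg₀' : g₀ = Matrix.of fun i j => if j = σ i then (1 : R) else 0 := hg₀
  have hk' : k = 1 + E := hk
  have hab : a ≠ b := by simp [ha, hb]
  have hσσ : ∀ i, σ (σ i) = i := by rintro (i | i) <;> simp [hσ, hs]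
  -- entrywise action of g₀
  have hg₀mul : ∀ (M : Matrix (Fin m ⊕ Fin m) (Fin m ⊕ Fin m) R) i j,
      (g₀ * M) i j = M (σ i) j := fun M i j => by
    rw [hg₀']; exact aux_perm_mul σ M i j
  have hmulg₀ : ∀ (M : Matrix (Fin m ⊕ Fin m) (Fin m ⊕ Fin m) R) i j,
      (M * g₀) i j = M i (σ j) := fun M i j => by
    rw [hg₀']; exact aux_mul_perm σ hσσ M i j
  have hg₀T : g₀.transpose = g₀ := by
    rw [hg₀']
    ext i j
    simp only [Matrix.transpose_apply, Matrix.of_apply]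
    congr 1
    apply propext
    constructor
    · rintro rfl; exact (hσσ j).symm
    · rintro rfl; exact (hσσ i).symm
  have hg₀sq : g₀ * g₀ = 1 := by
    ext i j
    rw [hg₀mul g₀ i j, hg₀']
    simp [hσσ, Matrix.one_apply, eq_comm]
  have hΩσ : ∀ i j, OmegaMat m R (σ i) (σ j) = OmegaMat m R i j := by
    rintro (i | i) (j | j) <;> simp [OmegaMat, hσ, Matrix.one_apply]
  -- first conjunct : g₀ is symplectic
  have hg₀Ω : g₀ * OmegaMat m R * g₀.transpose = OmegaMat m R := by
    rw [hg₀T]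
    ext i j
    rw [hmulg₀ _ i j, hg₀mul _ i (σ j), hΩσ]
  refine ⟨hg₀Ω, ?_, ?_⟩
  -- second conjunct : k is symplectic
  · have hET : E.transpose = Matrix.single b a 1 := by
      ext i j; simp [hE, Matrix.single, Matrix.transpose_apply, and_comm]
    have hEΩ : E * OmegaMat m R = -(Matrix.single a a (1:R)) := by
      ext i j
      rcases eq_or_ne i a with rfl | hi
      · rw [hE, Matrix.single_mul_apply_same, one_mul]
        rcases j with j | j <;>
          simp [OmegaMat, Matrix.one_apply, Matrix.single, ha, hb, eq_comm]
      · rw [hE, Matrix.single_mul_apply_of_ne _ _ _ i j hi]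
        simp [Matrix.single, Ne.symm hi]
    have hΩE : OmegaMat m R * Matrix.single b a (1:R)
        = Matrix.single a a (1:R) := by
      ext i j
      rcases eq_or_ne j a with rfl | hj
      · rw [Matrix.mul_single_apply_same, mul_one]
        rcases i with i | i <;>
          simp [OmegaMat, Matrix.one_apply, Matrix.single, ha, hb, eq_comm]
      · rw [Matrix.mul_single_apply_of_ne _ _ _ i j hj]
        simp [Matrix.single, Ne.symm hj]
    have hDE : Matrix.single a a (1:R) * Matrix.single b a (1:R) = 0 :=
      Matrix.single_mul_single_of_ne 1 a a b hab 1
    rw [hk', Matrix.transpose_add, Matrix.transpose_one, hET]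
    simp only [add_mul, mul_add, one_mul, mul_one, hEΩ, hΩE, neg_mul, hDE, neg_zero, add_zero]
    abel
  -- third conjunct
  · intro x hx
    have hΩΩ : OmegaMat m R * OmegaMat m R = -1 := by
      rw [OmegaMat, Matrix.fromBlocks_multiply, ← Matrix.fromBlocks_one, Matrix.fromBlocks_neg]
      simp
    have hdetΩ : IsUnit (OmegaMat m R).det :=
      Matrix.isUnit_det_of_right_inverse (B := -(OmegaMat m R))
        (by rw [Matrix.mul_neg, hΩΩ, neg_neg])
    have hdetx : IsUnit x.det := by
      have hdet := congrArg Matrix.det hx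
      rw [Matrix.det_mul, Matrix.det_mul, Matrix.det_transpose] at hdet
      have h1 : x.det * x.det = 1 := by
        apply hdetΩ.mul_right_cancel
        rw [one_mul]
        linear_combination hdet
      exact IsUnit.of_mul_eq_one _ h1
    have hxl : x⁻¹ * x = 1 := Matrix.nonsing_inv_mul x hdetx
    have hxr : x * x⁻¹ = 1 := Matrix.mul_nonsing_inv x hdetx
    have hdetxT : IsUnit x.transpose.det := by rwa [Matrix.det_transpose]
    have hxTr : x.transpose * (x.transpose)⁻¹ = 1 := Matrix.mul_nonsing_inv _ hdetxT
    have c1 : ∀ M, x * (x⁻¹ * M) = M := fun M => by rw [← Matrix.mul_assoc, hxr, one_mul]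
    have c2 : ∀ M, x⁻¹ * (x * M) = M := fun M => by rw [← Matrix.mul_assoc, hxl, one_mul]
    have c3 : ∀ M, g₀ * (g₀ * M) = M := fun M => by rw [← Matrix.mul_assoc, hg₀sq, one_mul]
    have hxΩ : ∀ M, x * (OmegaMat m R * (x.transpose * M)) = OmegaMat m R * M := fun M => by
      calc x * (OmegaMat m R * (x.transpose * M))
          = (x * OmegaMat m R * x.transpose) * M := by rw [Matrix.mul_assoc, Matrix.mul_assoc]
        _ = OmegaMat m R * M := by rw [hx]
    have hg₀Ω2 : ∀ M, g₀ * (OmegaMat m R * (g₀ * M)) = OmegaMat m R * M := fun M => by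
      calc g₀ * (OmegaMat m R * (g₀ * M))
          = (g₀ * OmegaMat m R * g₀.transpose) * M := by
            rw [hg₀T, Matrix.mul_assoc, Matrix.mul_assoc]
        _ = OmegaMat m R * M := by rw [hg₀Ω]
    have hgg : (x⁻¹ * g₀ * x) * (x⁻¹ * g₀ * x) = 1 := by
      simp only [Matrix.mul_assoc]
      rw [c1, c3, hxl]
    have hgg2 : ∀ M, (x⁻¹ * g₀ * x) * ((x⁻¹ * g₀ * x) * M) = M := fun M => by
      rw [← Matrix.mul_assoc, hgg, one_mul]
    have hgΩ : (x⁻¹ * g₀ * x) * OmegaMat m R * (x⁻¹ * g₀ * x).transpose = OmegaMat m R := by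
      have htr : (x⁻¹ * g₀ * x).transpose = x.transpose * (g₀ * (x.transpose)⁻¹) := by
        rw [Matrix.transpose_mul, Matrix.transpose_mul, hg₀T, Matrix.transpose_nonsing_inv]
      rw [htr]
      simp only [Matrix.mul_assoc]
      rw [hxΩ, hg₀Ω2]
      have hxinvΩ : OmegaMat m R * (x.transpose)⁻¹ = x * OmegaMat m R := by
        have h := hxΩ ((x.transpose)⁻¹)
        rw [hxTr, Matrix.mul_one] at h
        exact h.symm
      rw [hxinvΩ, c2]
    set g : Matrix (Fin m ⊕ Fin m) (Fin m ⊕ Fin m) R := x⁻¹ * g₀ * x with hg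
    have hga : g b a = 0 := aux_key_entry h2 h0 _ hgg hgΩ
    have hEgE : E * g * E = 0 := by
      rw [hE, aux_EME, hga, Matrix.single_zero]
    have z1 : E * (g * E) = 0 := by rw [← Matrix.mul_assoc]; exact hEgE
    have hL : g * E * g * E = 0 := by
      calc g * E * g * E = g * (E * (g * E)) := by
            simp only [Matrix.mul_assoc]
        _ = 0 := by rw [z1, Matrix.mul_zero]
    have hR : E * (g * E * g) = 0 := by
      calc E * (g * E * g) = (E * g * E) * g := by
            simp only [Matrix.mul_assoc]
        _ = 0 := by rw [hEgE, Matrix.zero_mul]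
    have expand : g * k * g = 1 + g * E * g := by
      rw [hk', mul_add, mul_one, add_mul, hgg]
    show g * k * g * k = k * (g * k * g)
    rw [expand, hk']
    have e1 : (1 + g * E * g) * (1 + E) = 1 + E + g * E * g := by
      rw [mul_add, mul_one, add_mul, one_mul, hL, add_zero]
      abel
    have e2 : (1 + E) * (1 + g * E * g) = 1 + E + g * E * g := by
      rw [mul_add, mul_one, add_mul, one_mul, hR, add_zero]
    rw [e1, e2]
end

section
/- Let q be a prime power and n = k + l with k ≥ 1. Let f be a hermitian form on V = F_{q²}^n (with respect to the involution α ↦ α^q) with radical of dimension l. Then the number of nonzero vectors v ∈ V with f(v,v) = 0 equals (q^k - (-1)^k)(q^{k-1} - (-1)^{k-1}) q^{2l} + q^{2l} - 1. -/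
open Polynomial Module Finset

section FieldLemmas
variable {q : ℕ} {K : Type*} [Field K] [Fintype K]

lemma s19_charP (hq : IsPrimePow q) (hK : Fintype.card K = q ^ 2) :
    ∃ p e : ℕ, p.Prime ∧ 0 < e ∧ p ^ e = q ∧ CharP K p := by
  obtain ⟨p, e, hp, he, rfl⟩ := hq
  replace hp : p.Prime := Nat.prime_iff.mpr hp
  refine ⟨p, e, hp, he, rfl, ?_⟩
  have h1 : (ringChar K).Prime := CharP.char_is_prime K (ringChar K)
  obtain ⟨n, hn, hcard⟩ := FiniteField.card K (ringChar K)
  have hpe : p = ringChar K := by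
    have hdvd : p ∣ (ringChar K) ^ (n : ℕ) := by
      rw [← hcard, hK, ← pow_mul]
      exact dvd_pow_self p (by positivity)
    exact (Nat.prime_dvd_prime_iff_eq hp h1).1 (hp.dvd_of_dvd_pow hdvd)
  rw [hpe]; exact ringChar.charP K

lemma s19_add_pow_q (hq : IsPrimePow q) (hK : Fintype.card K = q ^ 2) (x y : K) :
    (x + y) ^ q = x ^ q + y ^ q := by
  obtain ⟨p, e, hp, he, rfl, hchar⟩ := s19_charP hq hK
  haveI := Fact.mk hp
  exact add_pow_char_pow x y p e

lemma s19_sub_pow_q (hq : IsPrimePow q) (hK : Fintype.card K = q ^ 2) (x y : K) :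
    (x - y) ^ q = x ^ q - y ^ q :=
  map_sub (AddMonoidHom.mk' (fun x : K => x ^ q) (s19_add_pow_q hq hK)) x y

lemma s19_pow_q2 (hK : Fintype.card K = q ^ 2) (x : K) : x ^ (q * q) = x := by
  have := FiniteField.pow_card x
  rwa [hK, pow_two] at this

lemma s19_pow_q1_fixed (hK : Fintype.card K = q ^ 2) (x : K) :
    (x ^ (q + 1)) ^ q = x ^ (q + 1) := by
  rw [← pow_mul]
  have h : (q + 1) * q = q * q + q := by ring
  rw [h, pow_add, s19_pow_q2 hK, ← pow_succ']

private lemma s19_q_facts (hq : IsPrimePow q) : 2 ≤ q ∧ q + 2 ≤ q ^ 2 := by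
  have h2 : 2 ≤ q := hq.two_le
  refine ⟨h2, ?_⟩
  have h3 : 2 * q ≤ q * q := Nat.mul_le_mul_right q h2
  have h4 : q ^ 2 = q * q := sq q
  omega

/-- Not every element is fixed by `x ↦ x ^ q`. -/
lemma s19_exists_not_fixed (hq : IsPrimePow q) (hK : Fintype.card K = q ^ 2) :
    ∃ x : K, x ^ q ≠ x := by
  classical
  by_contra h
  push_neg at h
  obtain ⟨g, hg⟩ := IsCyclic.exists_ofOrder_eq_natCard (α := Kˣ)
  have hcard : Nat.card Kˣ = q ^ 2 - 1 := by
    rw [Nat.card_eq_fintype_card, Fintype.card_units, hK]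
  have hgq : g ^ q = g := Units.ext (by rw [Units.val_pow_eq_pow_val]; exact h (g : K))
  obtain ⟨h2, h3⟩ := s19_q_facts hq
  have h1 : g ^ (q - 1) = 1 := by
    have h4 : g ^ (q - 1) * g = g := by
      rw [← pow_succ, Nat.sub_add_cancel (by omega), hgq]
    exact mul_right_cancel (h4.trans (one_mul g).symm)
  have hdvd := orderOf_dvd_of_pow_eq_one h1
  rw [hg, hcard] at hdvd
  have hle := Nat.le_of_dvd (by omega) hdvd
  generalize hQ : q ^ 2 = Q at hle h3
  omega

/-- A primitive `n`-th root of unity exists for `n ∣ q² - 1`. -/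
lemma s19_exists_prim (hq : IsPrimePow q) (hK : Fintype.card K = q ^ 2)
    {n : ℕ} (hn : 0 < n) (hdvd : n ∣ q ^ 2 - 1) : ∃ ζ : K, IsPrimitiveRoot ζ n := by
  classical
  obtain ⟨g, hg⟩ := IsCyclic.exists_ofOrder_eq_natCard (α := Kˣ)
  have hcard : Nat.card Kˣ = q ^ 2 - 1 := by
    rw [Nat.card_eq_fintype_card, Fintype.card_units, hK]
  rw [hcard] at hg
  obtain ⟨h2, h3⟩ := s19_q_facts hq
  have hN : 0 < q ^ 2 - 1 := by omega
  refine ⟨((g ^ ((q ^ 2 - 1) / n) : Kˣ) : K), ?_⟩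
  have horder : orderOf (g ^ ((q ^ 2 - 1) / n)) = n := by
    rw [orderOf_pow, hg, Nat.gcd_eq_right (Nat.div_dvd_of_dvd hdvd),
      Nat.div_div_self hdvd hN.ne']
  have := IsPrimitiveRoot.orderOf ((g ^ ((q ^ 2 - 1) / n) : Kˣ) : K)
  rwa [orderOf_units, horder] at this

lemma s19_q2_sub_one (h : 1 ≤ q) : q ^ 2 - 1 = (q + 1) * (q - 1) := by
  cases q with
  | zero => omega
  | succ m =>
    have h5 : m + 1 - 1 = m := rfl
    have h4 : (m + 1) ^ 2 = (m + 1 + 1) * (m + 1 - 1) + 1 := by rw [h5]; ring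
    rw [h4, Nat.add_sub_cancel]

/-- If `u` has a `(q+1)`-th root and `u ≠ 0`, the number of roots is `q + 1`. -/
lemma s19_card_pow_root (hq : IsPrimePow q) (hK : Fintype.card K = q ^ 2)
    {u α : K} (hu : u ≠ 0) (hα : α ^ (q + 1) = u) :
    Nat.card {c : K // c ^ (q + 1) = u} = q + 1 := by
  classical
  obtain ⟨h2, _⟩ := s19_q_facts hq
  have hα0 : α ≠ 0 := by rintro rfl; rw [zero_pow (by omega)] at hα; exact hu hα.symm
  obtain ⟨ζ, hζ⟩ := s19_exists_prim hq hK (n := q + 1) (by omega)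
    ⟨q - 1, s19_q2_sub_one (by omega)⟩
  rw [Nat.card_eq_fintype_card, Fintype.card_subtype]
  have hbij : (univ.filter fun c : K => c ^ (q + 1) = u).card
      = (Polynomial.nthRootsFinset (q + 1) (1 : K)).card := by
    apply Finset.card_bij' (fun c _ => c / α) (fun x _ => α * x)
    · intro c hc
      simp only [mem_filter, mem_univ, true_and] at hc
      rw [Polynomial.mem_nthRootsFinset (by omega : 0 < q + 1), div_pow, hc, hα, div_self hu]
    · intro x hx
      rw [Polynomial.mem_nthRootsFinset (by omega : 0 < q + 1)] at hx
      simp only [mem_filter, mem_univ, true_and, mul_pow, hα, hx, mul_one]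
    · intro c _; field_simp
    · intro x _; field_simp
  rw [hbij, hζ.card_nthRootsFinset]

/-- Every nonzero fixed element of `x ↦ x^q` has a `(q+1)`-th root. -/
lemma s19_exists_root (hq : IsPrimePow q) (hK : Fintype.card K = q ^ 2)
    {u : K} (hu : u ≠ 0) (hfix : u ^ q = u) : ∃ α : K, α ^ (q + 1) = u := by
  classical
  obtain ⟨h2, h3⟩ := s19_q_facts hq
  obtain ⟨ζ, hζ⟩ := s19_exists_prim hq hK (n := q - 1) (by omega)
    ⟨q + 1, by rw [s19_q2_sub_one (by omega)]; ring⟩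
  set T : Finset K := Polynomial.nthRootsFinset (q - 1) (1 : K) with hT
  have hcardT : T.card = q - 1 := hζ.card_nthRootsFinset
  have hmemT : ∀ x : K, x ∈ T ↔ x ^ (q - 1) = 1 := fun x =>
    Polynomial.mem_nthRootsFinset (by omega) 1
  have hmaps : ∀ c ∈ univ.filter (fun c : K => c ≠ 0), c ^ (q + 1) ∈ T := by
    intro c hc
    simp only [mem_filter, mem_univ, true_and] at hc
    rw [hmemT, ← pow_mul, ← s19_q2_sub_one (by omega)]
    have := FiniteField.pow_card_sub_one_eq_one c hc
    rwa [hK] at this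
  have hsum := Finset.card_eq_sum_card_fiberwise hmaps
  have hcard_s : (univ.filter (fun c : K => c ≠ 0)).card = q ^ 2 - 1 := by
    rw [Finset.filter_ne', Finset.card_erase_of_mem (mem_univ 0), Finset.card_univ, hK]
  have hfiber : ∀ v ∈ T, ((univ.filter (fun c : K => c ≠ 0)).filter
      (fun c => c ^ (q + 1) = v)).card = if ∃ α : K, α ^ (q + 1) = v then q + 1 else 0 := by
    intro v hv
    have hv0 : v ≠ 0 := by
      rintro rfl
      rw [hmemT, zero_pow (by omega : q - 1 ≠ 0)] at hv
      exact one_ne_zero hv.symm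
    have heq : (univ.filter (fun c : K => c ≠ 0)).filter (fun c => c ^ (q + 1) = v) =
        univ.filter (fun c : K => c ^ (q + 1) = v) := by
      ext c
      simp only [mem_filter, mem_univ, true_and]
      constructor
      · rintro ⟨_, h⟩; exact h
      · intro h
        refine ⟨?_, h⟩
        rintro rfl
        rw [zero_pow (by omega : q + 1 ≠ 0)] at h
        exact hv0 h.symm
    rw [heq]
    split_ifs with hex
    · obtain ⟨α, hα⟩ := hex
      have := s19_card_pow_root hq hK hv0 hα
      rwa [Nat.card_eq_fintype_card, Fintype.card_subtype] at this
    · push_neg at hex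
      rw [Finset.card_eq_zero, Finset.filter_eq_empty_iff]
      intro c _
      exact hex c
  by_contra hnone
  push_neg at hnone
  have hune : u ∈ T := by
    rw [hmemT]
    have h4 : u ^ (q - 1) * u = 1 * u := by
      rw [← pow_succ, Nat.sub_add_cancel (by omega), one_mul]; exact hfix
    exact mul_right_cancel₀ hu h4
  have hTsplit : ∑ v ∈ T, ((univ.filter (fun c : K => c ≠ 0)).filter
      (fun c => c ^ (q + 1) = v)).card
      = ∑ v ∈ T, (if ∃ α : K, α ^ (q + 1) = v then q + 1 else 0) :=
    Finset.sum_congr rfl hfiber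
  rw [hTsplit] at hsum
  have hzero_at_u : (if ∃ α : K, α ^ (q + 1) = u then q + 1 else 0) = 0 := by
    rw [if_neg]; push_neg; exact hnone
  have hbound : ∑ v ∈ T, (if ∃ α : K, α ^ (q + 1) = v then q + 1 else 0)
      ≤ ∑ _v ∈ T.erase u, (q + 1) := by
    rw [← Finset.sum_erase T hzero_at_u]
    exact Finset.sum_le_sum (fun v _ => by split_ifs <;> omega)
  rw [Finset.sum_const, smul_eq_mul, Finset.card_erase_of_mem hune, hcardT] at hbound
  rw [hcard_s] at hsum
  rw [s19_q2_sub_one (by omega), mul_comm] at hsum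
  rw [← hsum] at hbound
  have hlt : (q - 1 - 1) * (q + 1) < (q - 1) * (q + 1) :=
    mul_lt_mul_of_pos_right (by omega) (by omega)
  exact absurd hbound (not_le.mpr hlt)

end FieldLemmas

/-- Number of isotropic vectors (incl. 0) in nondegenerate dim-k hermitian space, over q^{2l}. -/
def s19A (q : ℤ) (k : ℕ) : ℤ :=
  if k = 0 then 1 else q ^ (2 * k - 1) + (-1) ^ k * (q ^ k - q ^ (k - 1))

def s19B (q : ℤ) (k : ℕ) : ℤ :=
  if k = 0 then 0 else q ^ (2 * k - 1) - (-1) ^ k * q ^ (k - 1)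

lemma s19A_rec (q : ℤ) (k : ℕ) : s19A q (k + 1) = s19A q k + (q ^ 2 - 1) * s19B q k := by
  cases k with
  | zero => norm_num [s19A, s19B]
  | succ j =>
    have h1 : 2 * (j + 1 + 1) - 1 = 2 * j + 3 := by omega
    have h2 : 2 * (j + 1) - 1 = 2 * j + 1 := by omega
    simp only [s19A, s19B, if_neg (Nat.succ_ne_zero _), h1, h2, Nat.add_sub_cancel]
    ring

lemma s19B_rec (q : ℤ) (k : ℕ) :
    s19B q (k + 1) = (q + 1) * s19A q k + (q ^ 2 - q - 1) * s19B q k := by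
  cases k with
  | zero => norm_num [s19A, s19B]
  | succ j =>
    have h1 : 2 * (j + 1 + 1) - 1 = 2 * j + 3 := by omega
    have h2 : 2 * (j + 1) - 1 = 2 * j + 1 := by omega
    simp only [s19A, s19B, if_neg (Nat.succ_ne_zero _), h1, h2, Nat.add_sub_cancel]
    ring

lemma s19A_closed (q : ℤ) {k : ℕ} (hk : 1 ≤ k) :
    s19A q k = (q ^ k - (-1) ^ k) * (q ^ (k - 1) - (-1) ^ (k - 1)) + 1 := by
  obtain ⟨j, rfl⟩ : ∃ j, k = j + 1 := ⟨k - 1, by omega⟩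
  have h2 : 2 * (j + 1) - 1 = 2 * j + 1 := by omega
  simp only [s19A, if_neg (Nat.succ_ne_zero _), h2, Nat.add_sub_cancel]
  have h3 : ((-1 : ℤ)) ^ (j * 2) = 1 := by rw [mul_comm, pow_mul]; norm_num
  ring_nf
  rw [h3]
  ring
open Polynomial Module Finset

section Rad
variable {K V : Type*} [Field K] [AddCommGroup V] [Module K V]

/-- The radical of a sesquilinear-type form as a submodule. -/
def s19rad (f : V → V → K)
    (hadd : ∀ u u' v, f (u + u') v = f u v + f u' v)
    (hsmul : ∀ (a : K) (u v : V), f (a • u) v = a * f u v) : Submodule K V where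
  carrier := {v : V | ∀ w, f v w = 0}
  add_mem' := fun h1 h2 => fun w => by rw [hadd, h1 w, h2 w, add_zero]
  zero_mem' := fun w => by
    have h := hsmul 0 0 w
    rwa [zero_smul, zero_mul] at h
  smul_mem' := fun c v h => fun w => by rw [hsmul, h w, mul_zero]

lemma s19rad_span (f : V → V → K) (hadd) (hsmul) :
    Submodule.span K {v : V | ∀ w, f v w = 0} = s19rad f hadd hsmul :=
  Submodule.span_eq (s19rad f hadd hsmul)

end Rad

universe u

open scoped Classical in
lemma s19_count {q : ℕ} (hq : IsPrimePow q) {K : Type*} [Field K] [Fintype K]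
    (hK : Fintype.card K = q ^ 2) (k : ℕ) :
    ∀ {l : ℕ} {V : Type u} [AddCommGroup V] [Module K V] [FiniteDimensional K V]
      (f : V → V → K),
      (∀ u u' v, f (u + u') v = f u v + f u' v) →
      (∀ (a : K) (u v : V), f (a • u) v = a * f u v) →
      (∀ u v, f v u = f u v ^ q) →
      Module.finrank K V = k + l →
      Module.finrank K (Submodule.span K {v : V | ∀ w, f v w = 0} : Submodule K V) = l →
      ∀ b : K, (Nat.card {v : V // f v v = b} : ℤ) =
        if b = 0 then (q : ℤ) ^ (2 * l) * s19A q k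
        else if b ^ q = b then (q : ℤ) ^ (2 * l) * s19B q k else 0 := by
  obtain ⟨h2, hq2⟩ := s19_q_facts hq
  induction k with
  | zero =>
    intro l V _ _ _ f hadd hsmul hconj hn hrad b
    classical
    haveI : Finite V := Module.finite_of_finite K
    haveI : Fintype V := Fintype.ofFinite V
    rw [s19rad_span f hadd hsmul] at hrad
    have htop : s19rad f hadd hsmul = ⊤ :=
      Submodule.eq_top_of_finrank_eq (by rw [hrad, hn, zero_add])
    have hzero : ∀ v w : V, f v w = 0 := by
      intro v w
      have hv : v ∈ s19rad f hadd hsmul := htop ▸ Submodule.mem_top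
      exact hv w
    by_cases hb : b = 0
    · subst hb
      rw [if_pos rfl]
      have hall : ∀ v : V, f v v = 0 := fun v => hzero v v
      have hcardV : Nat.card {v : V // f v v = 0} = Nat.card V :=
        Nat.card_congr (Equiv.subtypeUnivEquiv hall)
      rw [hcardV, Nat.card_eq_fintype_card, card_eq_pow_finrank (K := K), hK, hn, zero_add]
      have : (q ^ 2) ^ l = q ^ (2 * l) := by rw [← pow_mul]
      rw [this]
      push_cast
      simp [s19A]
    · haveI : IsEmpty {v : V // f v v = b} :=
        ⟨fun ⟨v, hv⟩ => hb (hv ▸ (hzero v v))⟩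
      rw [Nat.card_of_isEmpty, if_neg hb]
      split_ifs <;> simp [s19B]
  | succ k IH =>
    intro l V _ _ _ f hadd hsmul hconj hn hrad b
    classical
    haveI : Finite V := Module.finite_of_finite K
    haveI : Fintype V := Fintype.ofFinite V
    -- derived algebraic identities
    have hfq : ∀ x y : K, (x + y) ^ q = x ^ q + y ^ q := s19_add_pow_q hq hK
    have hadd2 : ∀ u v w : V, f u (v + w) = f u v + f u w := by
      intro u v w
      rw [hconj (v + w) u, hadd, hfq, ← hconj v u, ← hconj w u]
    have hsmul2 : ∀ (c : K) (u v : V), f u (c • v) = c ^ q * f u v := by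
      intro c u v
      rw [hconj (c • v) u, hsmul, mul_pow, ← hconj v u]
    have hfix : ∀ v : V, (f v v) ^ q = f v v := fun v => (hconj v v).symm
    have hsub : ∀ u u' v : V, f (u - u') v = f u v - f u' v := by
      intro u u' v
      have h := hadd (u - u') u' v
      rw [sub_add_cancel] at h
      linear_combination -h
    -- the form is nonzero
    have hne : ∃ v w : V, f v w ≠ 0 := by
      by_contra hall
      push_neg at hall
      rw [s19rad_span f hadd hsmul] at hrad
      have htop : s19rad f hadd hsmul = ⊤ := by
        rw [Submodule.eq_top_iff']
        exact fun v w => hall v w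
      rw [htop, finrank_top, hn] at hrad
      omega
    -- there is an anisotropic vector
    have he : ∃ e : V, f e e ≠ 0 := by
      by_contra hiso
      push_neg at hiso
      obtain ⟨v0, w0, hvw⟩ := hne
      have hskew : ∀ u v : V, f u v + f v u = 0 := by
        intro u v
        have h0 := hiso (u + v)
        rw [hadd, hadd2, hadd2, hiso u, hiso v] at h0
        linear_combination h0
      have hgen : ∀ u v : V, f u v ^ q = - f u v := by
        intro u v
        have h := hskew u v
        rw [hconj u v] at h
        linear_combination h
      have hfixall : ∀ x : K, x ^ q = x := by
        intro x
        have hcq := hgen v0 w0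
        have h2' := hgen (x • v0) w0
        rw [hsmul, mul_pow, hcq] at h2'
        have h3 : x ^ q * (-(f v0 w0)) = x * (-(f v0 w0)) := by linear_combination h2'
        exact mul_right_cancel₀ (neg_ne_zero.2 hvw) h3
      obtain ⟨x, hx⟩ := s19_exists_not_fixed hq hK
      exact hx (hfixall x)
    obtain ⟨e, hae⟩ := he
    have hafix : (f e e) ^ q = f e e := hfix e
    -- the hyperplane W orthogonal to e
    set φe : V →ₗ[K] K :=
      { toFun := fun v => f v e
        map_add' := fun u v => hadd u v e
        map_smul' := fun c v => hsmul c v e } with hφe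
    set W := LinearMap.ker φe with hWdef
    have hWmem : ∀ v : V, v ∈ W ↔ f v e = 0 := fun v => LinearMap.mem_ker
    have hrange : LinearMap.range φe = ⊤ := by
      rw [eq_top_iff]
      rintro y -
      refine ⟨(y / f e e) • e, ?_⟩
      show f ((y / f e e) • e) e = y
      rw [hsmul]
      field_simp
    have hWrank : Module.finrank K W = k + l := by
      have h := LinearMap.finrank_range_add_finrank_ker φe
      rw [hrange, finrank_top, finrank_self, hn] at h
      rw [hWdef]
      omega
    -- the restricted form on W
    set g : W → W → K := fun w w' => f ↑w ↑w' with hgdef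
    have hgadd : ∀ u u' v : W, g (u + u') v = g u v + g u' v := fun u u' v =>
      hadd ↑u ↑u' ↑v
    have hgsmul : ∀ (c : K) (u v : W), g (c • u) v = c * g u v := fun c u v =>
      hsmul c ↑u ↑v
    have hgconj : ∀ u v : W, g v u = g u v ^ q := fun u v => hconj ↑u ↑v
    -- decomposition of vectors
    have hdecomp : ∀ x : V, ∃ (c : K) (w : V), w ∈ W ∧ x = c • e + w := by
      intro x
      refine ⟨f x e / f e e, x - (f x e / f e e) • e, ?_, by abel⟩
      rw [hWmem, hsub, hsmul]
      field_simp
      ring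
    -- the radical of g has rank l
    have hradW : Module.finrank K
        (Submodule.span K {w : W | ∀ w', g w w' = 0} : Submodule K W) = l := by
      rw [s19rad_span f hadd hsmul] at hrad
      rw [s19rad_span g hgadd hgsmul]
      have hle : s19rad f hadd hsmul ≤ W := by
        intro v hv
        rw [hWmem]
        exact hv e
      have hcomap : s19rad g hgadd hgsmul = (s19rad f hadd hsmul).comap W.subtype := by
        ext w
        constructor
        · intro hw x
          obtain ⟨c, w', hw', rfl⟩ := hdecomp x
          have h1 : f ↑w e = 0 := (hWmem ↑w).1 (SetLike.coe_mem w)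
          have h3 : f ↑w w' = 0 := hw ⟨w', hw'⟩
          show f ↑w (c • e + w') = 0
          rw [hadd2, hsmul2, h1, h3, mul_zero, add_zero]
        · intro hw w'
          exact hw ↑w'
      rw [hcomap]
      exact (LinearEquiv.finrank_eq (Submodule.comapSubtypeEquivOfLe hle)).trans hrad
    -- key algebraic identity
    have hq0 : q ≠ 0 := by omega
    have key : ∀ (c : K) (w : V), f w e = 0 →
        f (c • e + w) (c • e + w) = f e e * c ^ (q + 1) + f w w := by
      intro c w hw
      have hew : f e w = 0 := by rw [hconj w e, hw, zero_pow hq0]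
      rw [hadd, hsmul, hadd2, hadd2, hsmul2, hsmul2, hew, hw]
      ring
    by_cases hbfix : b ^ q = b
    · -- main case
      have hcount : (Nat.card {v : V // f v v = b} : ℤ)
          = ∑ c : K, (Nat.card {w : W // g w w = b - f e e * c ^ (q + 1)} : ℤ) := by
        rw [Nat.card_eq_fintype_card, Fintype.card_subtype]
        have hfib := Finset.card_eq_sum_card_fiberwise
          (s := univ.filter fun v : V => f v v = b) (t := (univ : Finset K))
          (f := fun v => f v e / f e e) (fun v _ => mem_univ _)
        rw [hfib]
        push_cast
        apply Finset.sum_congr rfl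
        intro c _
        rw [Nat.card_eq_fintype_card, Fintype.card_subtype]
        congr 1
        refine Finset.card_bij'
          (fun v hv => (⟨v - c • e, by
            simp only [mem_filter, mem_univ, true_and] at hv
            rw [hWmem, hsub, hsmul]
            rw [div_eq_iff hae] at hv
            rw [hv.2]
            exact sub_self _⟩ : W))
          (fun w hw => c • e + ↑w) ?_ ?_ ?_ ?_
        · intro v hv
          simp only [mem_filter, mem_univ, true_and] at hv ⊢
          obtain ⟨hv1, hv2⟩ := hv
          rw [div_eq_iff hae] at hv2
          have hwe : f (v - c • e) e = 0 := by rw [hsub, hsmul, hv2, sub_self]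
          have hvdec : c • e + (v - c • e) = v := by abel
          have hk := key c (v - c • e) hwe
          rw [hvdec, hv1] at hk
          show f (v - c • e) (v - c • e) = b - f e e * c ^ (q + 1)
          linear_combination - hk
        · intro w hw
          simp only [mem_filter, mem_univ, true_and] at hw ⊢
          have hwe : f (↑w) e = 0 := (hWmem ↑w).1 (SetLike.coe_mem w)
          have hw' : f ↑w ↑w = b - f e e * c ^ (q + 1) := hw
          constructor
          · rw [key c ↑w hwe, hw']
            ring
          · rw [hadd, hsmul, hwe, add_zero]
            field_simp
        · intro v hv
          simp only
          abel
        · intro w hw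
          apply Subtype.ext
          simp only [add_sub_cancel_left]
      have hIH : ∀ c : K, (Nat.card {w : W // g w w = b - f e e * c ^ (q + 1)} : ℤ)
          = if b - f e e * c ^ (q + 1) = 0 then (q : ℤ) ^ (2 * l) * s19A q k
            else (q : ℤ) ^ (2 * l) * s19B q k := by
        intro c
        rw [IH g hgadd hgsmul hgconj hWrank hradW (b - f e e * c ^ (q + 1))]
        have hfixed : (b - f e e * c ^ (q + 1)) ^ q = b - f e e * c ^ (q + 1) := by
          rw [s19_sub_pow_q hq hK, hbfix, mul_pow, hafix, s19_pow_q1_fixed hK]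
        by_cases h1 : b - f e e * c ^ (q + 1) = 0
        · rw [if_pos h1, if_pos h1]
        · rw [if_neg h1, if_pos hfixed, if_neg h1]
      rw [hcount]
      rw [Finset.sum_congr rfl (fun c _ => hIH c)]
      by_cases hb : b = 0
      · subst hb
        rw [if_pos rfl]
        have hcond : ∀ c : K, ((0 : K) - f e e * c ^ (q + 1) = 0) ↔ c = 0 := by
          intro c
          rw [zero_sub, neg_eq_zero, mul_eq_zero]
          constructor
          · rintro (h | h)
            · exact absurd h hae
            · exact pow_eq_zero_iff (by omega) |>.1 h
          · rintro rfl
            right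
            exact zero_pow (by omega)
        have hsimp : ∀ c : K,
            (if (0 : K) - f e e * c ^ (q + 1) = 0 then (q : ℤ) ^ (2 * l) * s19A q k
              else (q : ℤ) ^ (2 * l) * s19B q k)
            = (q : ℤ) ^ (2 * l) * s19B q k
              + (if c = 0 then (q : ℤ) ^ (2 * l) * s19A q k - (q : ℤ) ^ (2 * l) * s19B q k
                 else 0) := by
          intro c
          rw [show ((0 : K) - f e e * c ^ (q + 1) = 0) = (c = 0) from propext (hcond c)]
          split_ifs <;> ring
        rw [Finset.sum_congr rfl (fun c _ => hsimp c), Finset.sum_add_distrib,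
          Finset.sum_const, Finset.sum_ite_eq' univ (0 : K), if_pos (mem_univ _),
          Finset.card_univ, hK, s19A_rec]
        push_cast
        ring
      · rw [if_neg hb, if_pos hbfix]
        -- count c with f e e * c^(q+1) = b : q + 1 many
        have hu : b / f e e ≠ 0 := div_ne_zero hb hae
        have hufix : (b / f e e) ^ q = b / f e e := by rw [div_pow, hbfix, hafix]
        obtain ⟨α, hα⟩ := s19_exists_root hq hK hu hufix
        have hcard : (univ.filter fun c : K => b - f e e * c ^ (q + 1) = 0).card = q + 1 := by
          have h := s19_card_pow_root hq hK hu hα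
          rw [Nat.card_eq_fintype_card, Fintype.card_subtype] at h
          have hsets : (univ.filter fun c : K => b - f e e * c ^ (q + 1) = 0)
              = univ.filter fun c : K => c ^ (q + 1) = b / f e e := by
            ext c
            simp only [mem_filter, mem_univ, true_and]
            rw [sub_eq_zero, eq_div_iff hae]
            exact ⟨fun h' => by rw [h']; ring, fun h' => by rw [← h']; ring⟩
          rw [hsets]
          exact h
        rw [Finset.sum_ite, Finset.sum_const, Finset.sum_const, hcard,
          Finset.filter_not, Finset.card_sdiff_of_subset (Finset.filter_subset _ _),
          Finset.card_univ, hK, hcard, s19B_rec]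
        have hle' : q + 1 ≤ q ^ 2 := le_trans (by omega) hq2
        simp only [nsmul_eq_mul]
        rw [Nat.cast_sub hle']
        push_cast
        ring
    · -- b not fixed: no isotropic values
      have hb : b ≠ 0 := by
        rintro rfl
        exact hbfix (zero_pow (by omega))
      haveI : IsEmpty {v : V // f v v = b} := ⟨fun ⟨v, hv⟩ => hbfix (hv ▸ hfix v)⟩
      rw [Nat.card_of_isEmpty, if_neg hb, if_neg hbfix]
      norm_num

/-- Let `q` be a prime power, `K = F_{q²}`, and `f` a nonzero hermitian form
(with respect to `α ↦ α^q`) on an `n`-dimensional `K`-vector space `V`, whose radical has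
dimension `l`, with `n = k + l`, `k ≥ 1`. Then the number of nonzero isotropic vectors is
`(q^k - (-1)^k)(q^{k-1} - (-1)^{k-1}) q^{2l} + q^{2l} - 1`. -/
theorem stmt19 {q : ℕ} (hq : IsPrimePow q) {K : Type*} [Field K] [Fintype K]
    (hK : Fintype.card K = q ^ 2) {V : Type*} [AddCommGroup V] [Module K V]
    [FiniteDimensional K V] {n k l : ℕ} (hn : Module.finrank K V = n)
    (hkl : n = k + l) (hk : 1 ≤ k)
    (f : V → V → K)
    (hadd : ∀ u u' v, f (u + u') v = f u v + f u' v)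
    (hsmul : ∀ (a : K) (u v : V), f (a • u) v = a * f u v)
    (hconj : ∀ u v, f v u = f u v ^ q)
    (hrad : Module.finrank K
      (Submodule.span K {v : V | ∀ w, f v w = 0} : Submodule K V) = l) :
    (Nat.card {v : V // v ≠ 0 ∧ f v v = 0} : ℤ) =
      ((q : ℤ) ^ k - (-1) ^ k) * ((q : ℤ) ^ (k - 1) - (-1) ^ (k - 1)) * (q : ℤ) ^ (2 * l)
        + (q : ℤ) ^ (2 * l) - 1 := by
  classical
  haveI : Finite V := Module.finite_of_finite K
  haveI : Fintype V := Fintype.ofFinite V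
  have hmain := s19_count hq hK k f hadd hsmul hconj (by rw [hn, hkl]) hrad 0
  rw [if_pos rfl] at hmain
  have h00 : f 0 0 = 0 := by
    have h := hsmul 0 0 0
    rwa [zero_smul, zero_mul] at h
  have hmem0 : (0 : V) ∈ Finset.univ.filter fun v : V => f v v = 0 := by
    simp [h00]
  have hfs : (Finset.univ.filter fun v : V => v ≠ 0 ∧ f v v = 0)
      = (Finset.univ.filter fun v : V => f v v = 0).erase 0 := by
    ext v
    simp only [Finset.mem_filter, Finset.mem_univ, true_and, Finset.mem_erase]
  have hcards : Nat.card {v : V // v ≠ 0 ∧ f v v = 0}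
      = Nat.card {v : V // f v v = 0} - 1 := by
    rw [Nat.card_eq_fintype_card, Nat.card_eq_fintype_card, Fintype.card_subtype,
      Fintype.card_subtype, hfs, Finset.card_erase_of_mem hmem0]
  have hpos : 1 ≤ Nat.card {v : V // f v v = 0} := by
    rw [Nat.card_eq_fintype_card, Fintype.card_subtype]
    exact Finset.card_pos.2 ⟨0, hmem0⟩
  rw [hcards, Nat.cast_sub hpos, hmain, s19A_closed (q : ℤ) hk]
  push_cast
  ring
end
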